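/- arXiv:1405.4784 — 5 statements merged into one kernel-verified Lean document; each statement's English description precedes it below -/
import Mathlib

section
/- There exists a constant C > 0 such that for all sufficiently large real x not an integer, |∑_{n ≤ x} d(n) − (−π²/12 + (log x + 2γ − 1)·x)| ≤ C·x^{1/2}. -/
open Filter Finset Real


lemma sumA (N : ℕ) : ∑ n ∈ Icc 1 N, (n.divisors.card) = ∑ a ∈ Icc 1 N, N / a := by
  have h1 : ∀ n ∈ Icc 1 N, n.divisors.card = ((Icc 1 N).filter (· ∣ n)).card := by
    intro n hn
    simp only [mem_Icc] at hn
    congr 1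
    ext a
    simp only [Nat.mem_divisors, mem_filter, mem_Icc]
    constructor
    · rintro ⟨ha, hn0⟩
      exact ⟨⟨Nat.pos_of_dvd_of_pos ha (by omega), le_trans (Nat.le_of_dvd (by omega) ha) hn.2⟩, ha⟩
    · rintro ⟨_, ha⟩
      exact ⟨ha, by omega⟩
  rw [Finset.sum_congr rfl h1]
  simp_rw [Finset.card_filter]
  rw [Finset.sum_comm]
  refine Finset.sum_congr rfl fun a ha => ?_
  rw [← Finset.card_filter]
  have h2 : Icc 1 N = Ioc 0 N := by rw [← Finset.Icc_add_one_left_eq_Ioc]; rfl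
  rw [h2]
  exact Nat.Ioc_filter_dvd_card_eq_div N a

lemma sumB (N : ℕ) : ∑ a ∈ Icc 1 N, N / a + N.sqrt ^ 2 = 2 * ∑ a ∈ Icc 1 N.sqrt, N / a := by
  set K := N.sqrt with hK
  have hKN : K ≤ N := Nat.sqrt_le_self N
  have hIcc : ∀ m : ℕ, Icc 1 m = Ioc 0 m := fun m => by rw [← Finset.Icc_add_one_left_eq_Ioc]; rfl
  have hNK : N < (K+1) * (K+1) := Nat.lt_succ_sqrt N
  have hKK : K * K ≤ N := Nat.sqrt_le N
  have hsplit : ∑ a ∈ Ioc 0 K, N / a + ∑ a ∈ Ioc K N, N / a = ∑ a ∈ Ioc 0 N, N / a :=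
    Finset.sum_Ioc_consecutive _ (Nat.zero_le K) hKN
  have key : ∑ a ∈ Ioc K N, N / a + K ^ 2 = ∑ b ∈ Ioc 0 K, N / b := by
    have h1 : ∀ a ∈ Ioc K N, N / a = ((Ioc 0 K).filter (fun b => a * b ≤ N)).card := by
      intro a ha
      simp only [mem_Ioc] at ha
      have ha0 : 0 < a := lt_of_le_of_lt (Nat.zero_le K) ha.1
      have hda : N / a ≤ K := by
        have : N / a ≤ N / (K + 1) := Nat.div_le_div_left ha.1 (Nat.succ_pos K)
        have h2 : N / (K + 1) < K + 1 := (Nat.div_lt_iff_lt_mul (Nat.succ_pos K)).2 hNK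
        omega
      have hfe : (Ioc 0 K).filter (fun b => a * b ≤ N) = Ioc 0 (N / a) := by
        ext b
        simp only [mem_filter, mem_Ioc]
        constructor
        · rintro ⟨⟨hb0, hbK⟩, hab⟩
          exact ⟨hb0, (Nat.le_div_iff_mul_le ha0).2 (by rwa [mul_comm])⟩
        · rintro ⟨hb0, hbd⟩
          refine ⟨⟨hb0, le_trans hbd hda⟩, ?_⟩
          rw [mul_comm]
          exact (Nat.le_div_iff_mul_le ha0).1 hbd
      rw [hfe, Nat.card_Ioc, Nat.sub_zero]
    rw [Finset.sum_congr rfl h1]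
    simp_rw [Finset.card_filter]
    rw [Finset.sum_comm]
    have h3 : ∀ b ∈ Ioc 0 K, (∑ a ∈ Ioc K N, if a * b ≤ N then 1 else 0) = N / b - K := by
      intro b hb
      simp only [mem_Ioc] at hb
      rw [← Finset.card_filter]
      have hfe : (Ioc K N).filter (fun a => a * b ≤ N) = Ioc K (N / b) := by
        ext a
        simp only [mem_filter, mem_Ioc]
        have hNbN : N / b ≤ N := Nat.div_le_self N b
        constructor
        · rintro ⟨⟨hKa, haN⟩, hab⟩
          exact ⟨hKa, (Nat.le_div_iff_mul_le hb.1).2 hab⟩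
        · rintro ⟨hKa, had⟩
          exact ⟨⟨hKa, le_trans had hNbN⟩, (Nat.le_div_iff_mul_le hb.1).1 had⟩
      rw [hfe, Nat.card_Ioc]
    rw [Finset.sum_congr rfl h3]
    have h4 : ∀ b ∈ Ioc 0 K, K ≤ N / b := by
      intro b hb
      simp only [mem_Ioc] at hb
      exact (Nat.le_div_iff_mul_le hb.1).2 (le_trans (Nat.mul_le_mul_left K hb.2) hKK)
    have h5 : ∑ b ∈ Ioc 0 K, (N / b - K) + K ^ 2
        = ∑ b ∈ Ioc 0 K, ((N / b - K) + K) := by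
      rw [Finset.sum_add_distrib]
      simp [Nat.card_Ioc, sq]
    rw [h5]
    exact Finset.sum_congr rfl fun b hb => Nat.sub_add_cancel (h4 b hb)
  rw [hIcc, hIcc, ← hsplit]
  omega

lemma harmBound (K : ℕ) (hK : 1 ≤ K) :
    |∑ a ∈ Icc 1 K, (a : ℝ)⁻¹ - Real.log K - eulerMascheroniConstant| ≤ 1 / K := by
  have hKR : (0:ℝ) < K := by exact_mod_cast hK
  have hsum : ∑ a ∈ Icc 1 K, (a : ℝ)⁻¹ = (harmonic K : ℝ) := by
    rw [harmonic_eq_sum_Icc]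
    push_cast
    rfl
  have h1 : eulerMascheroniConstant < (harmonic K : ℝ) - Real.log K := by
    have := eulerMascheroniConstant_lt_eulerMascheroniSeq' K
    rwa [eulerMascheroniSeq', if_neg (by omega)] at this
  have h2 : (harmonic K : ℝ) - Real.log (K + 1) < eulerMascheroniConstant := by
    have := eulerMascheroniSeq_lt_eulerMascheroniConstant K
    rwa [eulerMascheroniSeq] at this
  have h3 : Real.log (K + 1) - Real.log K ≤ 1 / K := by
    rw [← Real.log_div (by positivity) (by positivity)]
    have := Real.log_le_sub_one_of_pos (show (0:ℝ) < ((K:ℝ)+1)/K by positivity)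
    have h4 : ((K:ℝ)+1)/K - 1 = 1 / K := by field_simp; ring
    linarith
  rw [hsum, abs_le]
  constructor <;> nlinarith [one_div_pos.2 hKR]

set_option maxHeartbeats 1000000 in
/-- There exists `C > 0` such that for all sufficiently large real `x`
not an integer, `|∑_{n ≤ x} d(n) − (−π²/12 + (log x + 2γ − 1)x)| ≤ C x^{1/2}`. -/
theorem divisor_summatory_error_unconditional :
    ∃ C : ℝ, 0 < C ∧ ∀ᶠ x : ℝ in atTop, (∀ n : ℤ, x ≠ n) →
      |(∑ n ∈ Finset.Icc 1 ⌊x⌋₊, (n.divisors.card : ℝ)) -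
        (-(Real.pi) ^ 2 / 12 + (Real.log x + 2 * Real.eulerMascheroniConstant - 1) * x)| ≤
        C * x ^ ((1 : ℝ) / 2) := by
  refine ⟨20, by norm_num, ?_⟩
  filter_upwards [eventually_ge_atTop (100 : ℝ)] with x hx _
  have hx0 : (0:ℝ) < x := by linarith
  set N : ℕ := ⌊x⌋₊ with hNdef
  set K : ℕ := N.sqrt with hKdef
  set s : ℝ := Real.sqrt x with hsdef
  set kR : ℝ := (K : ℝ) with hkRdef
  rw [show x ^ ((1:ℝ)/2) = s from (Real.sqrt_eq_rpow x).symm]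
  have hs0 : 0 ≤ s := Real.sqrt_nonneg x
  have hss : s * s = x := Real.mul_self_sqrt hx0.le
  have hNx : (N : ℝ) ≤ x := Nat.floor_le hx0.le
  have hxN : x < N + 1 := Nat.lt_floor_add_one x
  have hkR0 : 0 ≤ kR := Nat.cast_nonneg K
  have hk2 : kR * kR ≤ x := by
    have h : K * K ≤ N := Nat.sqrt_le N
    have h2 : (K:ℝ) * K ≤ (N:ℝ) := by exact_mod_cast h
    linarith
  have hklb' : (N : ℝ) + 1 ≤ (kR + 1) * (kR + 1) := by
    have h' : N + 1 ≤ (K + 1) * (K + 1) := Nat.lt_succ_sqrt N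
    have h2 : ((N:ℕ):ℝ) + 1 ≤ ((K:ℝ) + 1) * ((K:ℝ) + 1) := by exact_mod_cast h'
    linarith
  have hNpos : 0 < N := Nat.floor_pos.2 (by linarith)
  have hK1 : 1 ≤ K := Nat.sqrt_pos.2 hNpos
  have hkR1 : (1:ℝ) ≤ kR := by rw [hkRdef]; exact_mod_cast hK1
  have hs10 : 10 ≤ s := by nlinarith [hss, hs0, hx]
  have hklb : s - 1 < kR := by
    by_contra hcon
    push_neg at hcon
    have h3 : kR + 1 ≤ s := by linarith
    have h4 : (kR + 1) * (kR + 1) ≤ s * s := mul_le_mul h3 h3 (by linarith) hs0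
    linarith
  have hk1 : 0.9 * s ≤ kR := by linarith
  have hkRpos : (0:ℝ) < kR := by linarith
  have hkub : kR ≤ s := by nlinarith [hk2, hss, hs0, hkR0]
  have hxk2 : x - kR ^ 2 ≤ 2 * s := by nlinarith [hklb, hss, hs0, hs10]
  have hxk0 : 0 ≤ x - kR ^ 2 := by nlinarith [hk2]
  have hk3 : 0.81 * x ≤ kR ^ 2 := by nlinarith [hk1, hs0, hss]
  -- floor-division sums
  set T : ℝ := ∑ a ∈ Finset.Icc 1 K, ((N / a : ℕ) : ℝ) with hTdef
  set H : ℝ := ∑ a ∈ Finset.Icc 1 K, (a : ℝ)⁻¹ with hHdef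
  have hterm : ∀ a ∈ Finset.Icc 1 K, x * (a:ℝ)⁻¹ - 1 ≤ ((N / a : ℕ) : ℝ) ∧
      ((N / a : ℕ) : ℝ) ≤ x * (a:ℝ)⁻¹ := by
    intro a ha
    simp only [Finset.mem_Icc] at ha
    have ha0 : (0:ℝ) < a := by exact_mod_cast ha.1
    have hfd : N / a = ⌊x / a⌋₊ := (Nat.floor_div_natCast x a).symm
    have h1 : (⌊x / a⌋₊ : ℝ) ≤ x / a := Nat.floor_le (by positivity)
    have h2 : x / a < ⌊x / a⌋₊ + 1 := Nat.lt_floor_add_one _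
    rw [hfd]
    constructor
    · rw [mul_comm, ← div_eq_inv_mul]; linarith
    · rw [mul_comm, ← div_eq_inv_mul]; linarith
  have hT1 : T ≤ x * H := by
    rw [hTdef, hHdef, Finset.mul_sum]
    exact Finset.sum_le_sum fun a ha => (hterm a ha).2
  have hT2 : x * H - kR ≤ T := by
    have hc : ∑ _a ∈ Finset.Icc 1 K, (1:ℝ) = kR := by simp [hkRdef]
    have he : x * H - kR = ∑ a ∈ Finset.Icc 1 K, (x * (a:ℝ)⁻¹ - 1) := by
      rw [Finset.sum_sub_distrib, hHdef, Finset.mul_sum, hc]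
    rw [he]
    exact Finset.sum_le_sum fun a ha => (hterm a ha).1
  have hS : (∑ n ∈ Finset.Icc 1 N, (n.divisors.card : ℝ)) = 2 * T - kR ^ 2 := by
    have h3 : (∑ n ∈ Finset.Icc 1 N, (n.divisors.card) : ℕ) + K ^ 2
        = 2 * ∑ a ∈ Finset.Icc 1 K, N / a := by rw [sumA]; exact sumB N
    have h4 : ((∑ n ∈ Finset.Icc 1 N, (n.divisors.card) : ℕ) : ℝ) + (K:ℝ) ^ 2
        = 2 * ∑ a ∈ Finset.Icc 1 K, ((N / a : ℕ) : ℝ) := by exact_mod_cast h3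
    rw [Nat.cast_sum] at h4
    rw [hTdef]
    linarith [h4]
  have hH : |H - Real.log kR - Real.eulerMascheroniConstant| ≤ 1 / kR := by
    have h := harmBound K hK1
    rw [← hHdef, ← hkRdef] at h
    exact h
  rw [hS]
  clear_value T H kR s K N
  clear hterm hNdef hKdef hsdef hkRdef hTdef hHdef
  -- now pure real arithmetic
  have hd2 : |2 * x * (H - Real.log kR - Real.eulerMascheroniConstant)| ≤ (20/9) * s := by
    rw [abs_mul, abs_of_nonneg (show (0:ℝ) ≤ 2 * x by linarith)]
    have h2 : 2 * x * |H - Real.log kR - Real.eulerMascheroniConstant| ≤ 2 * x * (1 / kR) :=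
      mul_le_mul_of_nonneg_left hH (by linarith)
    have h3 : 2 * x * (1 / kR) ≤ (20/9) * s := by
      rw [mul_one_div, div_le_iff₀ hkRpos]
      nlinarith
    linarith
  have hkx : (0:ℝ) < kR ^ 2 / x := by positivity
  have ha3eq : x * Real.log (kR ^ 2 / x) = 2 * x * Real.log kR - x * Real.log x := by
    rw [Real.log_div (by positivity) hx0.ne', Real.log_pow]
    push_cast
    ring
  have ha3u : x * Real.log (kR ^ 2 / x) ≤ 0 := by
    have h1 : Real.log (kR ^ 2 / x) ≤ kR ^ 2 / x - 1 := Real.log_le_sub_one_of_pos hkx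
    have h3 : x * (kR ^ 2 / x - 1) = kR ^ 2 - x := by field_simp
    have h4 := mul_le_mul_of_nonneg_left h1 hx0.le
    linarith
  have ha3l : -(2.5 * s) ≤ x * Real.log (kR ^ 2 / x) := by
    have hkRsq : (0:ℝ) < kR ^ 2 := by positivity
    have h1 : Real.log (x / kR ^ 2) ≤ x / kR ^ 2 - 1 :=
      Real.log_le_sub_one_of_pos (by positivity)
    have h2 : Real.log (kR ^ 2 / x) = - Real.log (x / kR ^ 2) := by
      rw [← Real.log_inv]
      congr 1
      field_simp
    rw [h2, mul_neg]
    have h3 : x / kR ^ 2 - 1 ≤ 2.5 * s / x := by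
      rw [div_sub_one hkRsq.ne', div_le_div_iff₀ hkRsq hx0]
      nlinarith
    have h4 : x * (x / kR ^ 2 - 1) ≤ 2.5 * s := by
      have h5 := mul_le_mul_of_nonneg_left h3 hx0.le
      have h6 : x * (2.5 * s / x) = 2.5 * s := by field_simp
      linarith
    have h6 := mul_le_mul_of_nonneg_left h1 hx0.le
    linarith
  have hpi : Real.pi ^ 2 / 12 ≤ 2 := by nlinarith [Real.pi_le_four, Real.pi_pos]
  have hpi0 : 0 ≤ Real.pi ^ 2 / 12 := by positivity
  have hdecomp : 2 * T - kR ^ 2 -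
      (-(Real.pi) ^ 2 / 12 + (Real.log x + 2 * Real.eulerMascheroniConstant - 1) * x)
      = 2 * (T - x * H) + 2 * x * (H - Real.log kR - Real.eulerMascheroniConstant)
        + x * Real.log (kR ^ 2 / x) + (x - kR ^ 2) + Real.pi ^ 2 / 12 := by
    rw [ha3eq]; ring
  rw [abs_le]
  obtain ⟨hd2l, hd2r⟩ := abs_le.1 hd2
  constructor <;> rw [hdecomp] <;>
    linarith [ha3u, ha3l, hxk2, hxk0, hT1, hT2, hpi, hpi0, hs10, hkub, hkR0]
end

section
/- For every complex number s with Re(s) > 1, ∑_{n ≥ 1} d(n)²/n^s = ζ(s)⁴/ζ(2s). -/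
open ArithmeticFunction Complex Finset
open scoped LSeries.notation
open scoped ArithmeticFunction.zeta

namespace DSq

/-- Indicator of nonzero squares, as a real-valued arithmetic function. -/
noncomputable def sqR : ArithmeticFunction ℝ :=
  ⟨fun n => if IsSquare n ∧ n ≠ 0 then 1 else 0, by simp⟩

lemma sqR_apply (n : ℕ) : sqR n = if IsSquare n ∧ n ≠ 0 then 1 else 0 := rfl

lemma sqR_nonneg (n : ℕ) : 0 ≤ sqR n := by
  rw [sqR_apply]; split <;> norm_num

lemma isSquare_mul_iff {m n : ℕ} (h : Nat.Coprime m n) (hm : m ≠ 0) (hn : n ≠ 0) :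
    IsSquare (m * n) ↔ IsSquare m ∧ IsSquare n := by
  constructor
  · rintro ⟨r, hr⟩
    have hr2 : m * n = r ^ 2 := by rw [hr]; ring
    have hu : IsUnit (gcd m n) := by
      rw [Nat.isUnit_iff]
      exact h
    obtain ⟨a, ha⟩ := exists_eq_pow_of_mul_eq_pow hu hr2
    have hu' : IsUnit (gcd n m) := by
      rw [Nat.isUnit_iff]
      exact h.symm
    obtain ⟨b, hb⟩ := exists_eq_pow_of_mul_eq_pow hu' (by rw [mul_comm]; exact hr2)
    exact ⟨⟨a, by rw [ha]; ring⟩, ⟨b, by rw [hb]; ring⟩⟩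
  · rintro ⟨⟨a, ha⟩, ⟨b, hb⟩⟩
    exact ⟨a * b, by rw [ha, hb]; ring⟩

lemma sqR_isMultiplicative : sqR.IsMultiplicative := by
  constructor
  · simp [sqR_apply]
  · intro m n h
    rcases eq_or_ne m 0 with rfl | hm
    · have : n = 1 := Nat.coprime_zero_left n |>.mp h
      subst this; simp [sqR_apply]
    rcases eq_or_ne n 0 with rfl | hn
    · have : m = 1 := Nat.coprime_zero_right m |>.mp h
      subst this; simp [sqR_apply]
    simp only [sqR_apply, isSquare_mul_iff h hm hn, Nat.mul_ne_zero hm hn, ne_eq,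
      not_false_eq_true, and_true, hm, hn]
    by_cases h1 : IsSquare m <;> by_cases h2 : IsSquare n <;> simp [h1, h2]

lemma isSquare_prime_pow_iff {p : ℕ} (hp : p.Prime) (i : ℕ) :
    IsSquare (p ^ i) ↔ Even i := by
  constructor
  · rintro ⟨r, hr⟩
    have hr2 : p ^ i = r ^ 2 := by rw [hr]; ring
    have h1 : (p ^ i).factorization p = i := by
      simp [Nat.Prime.factorization_pow hp]
    have h2 : (r ^ 2).factorization p = 2 * r.factorization p := by
      simp [Nat.factorization_pow, mul_comm]
    rw [hr2, h2] at h1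
    exact ⟨r.factorization p, by omega⟩
  · rintro ⟨j, hj⟩
    exact ⟨p ^ j, by rw [← pow_add, hj]⟩

lemma sqR_prime_pow {p : ℕ} (hp : p.Prime) (i : ℕ) :
    sqR (p ^ i) = if Even i then 1 else 0 := by
  by_cases h : Even i
  · rw [if_pos h, sqR_apply, if_pos ⟨(isSquare_prime_pow_iff hp i).mpr h,
      pow_ne_zero i hp.ne_zero⟩]
  · rw [if_neg h, sqR_apply, if_neg]
    rintro ⟨hsq, -⟩
    exact h ((isSquare_prime_pow_iff hp i).mp hsq)

/-- `d` as a real-valued arithmetic function. -/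
noncomputable def dR : ArithmeticFunction ℝ :=
  ((ArithmeticFunction.sigma 0 : ArithmeticFunction ℕ) : ArithmeticFunction ℝ)

lemma dR_apply (n : ℕ) : dR n = (n.divisors.card : ℝ) := by
  simp [dR, natCoe_apply, sigma_zero_apply]

lemma dR_prime_pow {p : ℕ} (hp : p.Prime) (i : ℕ) : dR (p ^ i) = (i + 1 : ℕ) := by
  simp [dR, natCoe_apply, ArithmeticFunction.sigma_zero_apply_prime_pow hp]

lemma gaussR (n : ℕ) : ∑ i ∈ range n, ((i + 1 : ℕ) : ℝ) = n * (n + 1) / 2 := by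
  induction n with
  | zero => simp
  | succ n ih =>
    rw [Finset.sum_range_succ, ih]
    push_cast
    ring

lemma sumB (k : ℕ) :
    ∑ i ∈ range (k + 1), ((i + 1 : ℕ) : ℝ) * ((k - i + 1 : ℕ) : ℝ) =
      (k + 1) * (k + 2) * (k + 3) / 6 := by
  induction k with
  | zero => simp; norm_num
  | succ k ih =>
    rw [Finset.sum_range_succ]
    have hcong : ∑ i ∈ range (k + 1), ((i + 1 : ℕ) : ℝ) * ((k + 1 - i + 1 : ℕ) : ℝ) =
        ∑ i ∈ range (k + 1),
          (((i + 1 : ℕ) : ℝ) * ((k - i + 1 : ℕ) : ℝ) + ((i + 1 : ℕ) : ℝ)) := by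
      refine Finset.sum_congr rfl fun i hi => ?_
      have hik : i ≤ k := Nat.lt_succ_iff.mp (Finset.mem_range.mp hi)
      have : (k + 1 - i + 1 : ℕ) = (k - i + 1 : ℕ) + 1 := by omega
      rw [this]
      push_cast
      ring
    rw [hcong, Finset.sum_add_distrib, ih, gaussR (k + 1)]
    have : (k + 1 - (k + 1) + 1 : ℕ) = 1 := by omega
    rw [this]
    push_cast
    ring

lemma sumA' (k : ℕ) :
    ∑ j ∈ range (k + 1), (if Even (k - j) then ((j + 1 : ℕ) : ℝ) ^ 2 else 0) =
      (k + 1) * (k + 2) * (k + 3) / 6 := by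
  induction k using Nat.twoStepInduction with
  | zero => simp; norm_num
  | one => rw [Finset.sum_range_succ, Finset.sum_range_one]; norm_num
  | more k ih _ =>
    rw [show k + 2 + 1 = (k + 1) + 1 + 1 by rfl, Finset.sum_range_succ, Finset.sum_range_succ]
    have hcong : ∑ j ∈ range (k + 1),
        (if Even (k + 2 - j) then ((j + 1 : ℕ) : ℝ) ^ 2 else 0) =
        ∑ j ∈ range (k + 1), (if Even (k - j) then ((j + 1 : ℕ) : ℝ) ^ 2 else 0) := by
      refine Finset.sum_congr rfl fun j hj => ?_
      have hjk : j ≤ k := Nat.lt_succ_iff.mp (Finset.mem_range.mp hj)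
      have : Even (k + 2 - j) ↔ Even (k - j) := by
        rw [Nat.even_sub (by omega), Nat.even_sub (by omega), Nat.even_add]
        simp
      simp [this]
    rw [hcong, ih]
    have h1 : ¬ Even (k + 2 - (k + 1)) := by
      simp [show k + 2 - (k + 1) = 1 by omega]
    have h2 : Even (k + 2 - (k + 2)) := by simp
    rw [if_neg h1, if_pos h2]
    push_cast
    ring

lemma sumA (k : ℕ) :
    ∑ i ∈ range (k + 1), (if Even i then ((k - i + 1 : ℕ) : ℝ) ^ 2 else 0) =
      (k + 1) * (k + 2) * (k + 3) / 6 := by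
  rw [← sumA' k]
  have := Finset.sum_range_reflect
    (fun j => if Even (k - j) then ((j + 1 : ℕ) : ℝ) ^ 2 else 0) (k + 1)
  rw [← this]
  refine Finset.sum_congr rfl fun i hi => ?_
  have hik : i ≤ k := Nat.lt_succ_iff.mp (Finset.mem_range.mp hi)
  have h1 : k + 1 - 1 - i = k - i := by omega
  have h2 : k - (k - i) = i := by omega
  simp only [h1, h2]

/-- The key arithmetic-function identity: `sq * d² = d ∗ d` (Dirichlet convolution). -/
lemma key : sqR * ArithmeticFunction.pmul dR dR = dR * dR := by
  have hd : dR.IsMultiplicative := (isMultiplicative_sigma (k := 0)).natCast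
  rw [ArithmeticFunction.IsMultiplicative.eq_iff_eq_on_prime_powers _
    (sqR_isMultiplicative.mul (hd.pmul hd)) _ (hd.mul hd)]
  intro p i hp
  rw [ArithmeticFunction.mul_apply, ArithmeticFunction.mul_apply,
    Nat.sum_divisorsAntidiagonal (f := fun a b => sqR a * ArithmeticFunction.pmul dR dR b),
    Nat.sum_divisorsAntidiagonal (f := fun a b => dR a * dR b),
    Nat.sum_divisors_prime_pow hp, Nat.sum_divisors_prime_pow hp]
  have hdiv : ∀ x ∈ range (i + 1), p ^ i / p ^ x = p ^ (i - x) := by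
    intro x hx
    rw [Nat.pow_div (Nat.lt_succ_iff.mp (Finset.mem_range.mp hx)) hp.pos]
  calc ∑ x ∈ range (i + 1), sqR (p ^ x) * ArithmeticFunction.pmul dR dR (p ^ i / p ^ x)
      = ∑ x ∈ range (i + 1), (if Even x then ((i - x + 1 : ℕ) : ℝ) ^ 2 else 0) := by
        refine Finset.sum_congr rfl fun x hx => ?_
        rw [hdiv x hx, sqR_prime_pow hp, ArithmeticFunction.pmul_apply,
          dR_prime_pow hp]
        split <;> [rw [one_mul, sq]; rw [zero_mul]]
    _ = ∑ x ∈ range (i + 1), dR (p ^ x) * dR (p ^ i / p ^ x) := by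
        rw [sumA i]
        rw [← sumB i]
        refine (Finset.sum_congr rfl fun x hx => ?_).symm
        rw [hdiv x hx, dR_prime_pow hp, dR_prime_pow hp]

/-- Casting a Dirichlet convolution of real arithmetic functions to `ℂ`. -/
lemma conv_coe (f g : ArithmeticFunction ℝ) :
    (fun n => ((f n : ℝ) : ℂ)) ⍟ (fun n => ((g n : ℝ) : ℂ)) =
      fun n => (((f * g) n : ℝ) : ℂ) := by
  funext n
  simp only [LSeries.convolution_def, ArithmeticFunction.mul_apply]
  push_cast
  rfl

noncomputable def Gc : ℕ → ℂ := fun n => ((sqR n : ℝ) : ℂ)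
noncomputable def Dc : ℕ → ℂ := fun n => ((dR n : ℝ) : ℂ)
noncomputable def Fc : ℕ → ℂ := fun n => (((ArithmeticFunction.pmul dR dR) n : ℝ) : ℂ)

lemma conv_key : Gc ⍟ Fc = Dc ⍟ Dc := by
  unfold Gc Fc Dc
  rw [conv_coe, conv_coe, key]

lemma dR_eq_zeta_mul_zeta :
    dR = ((ζ : ArithmeticFunction ℕ) : ArithmeticFunction ℝ) *
      ((ζ : ArithmeticFunction ℕ) : ArithmeticFunction ℝ) := by
  rw [dR, ← natCoe_mul]
  congr 1
  rw [← zeta_mul_pow_eq_sigma (k := 0), pow_zero_eq_zeta]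

lemma Dc_eq_conv : Dc = (↗(ζ : ArithmeticFunction ℕ)) ⍟ (↗(ζ : ArithmeticFunction ℕ)) := by
  have h : ↗(ζ : ArithmeticFunction ℕ) =
      fun n => ((((ζ : ArithmeticFunction ℕ) : ArithmeticFunction ℝ)) n : ℂ) := by
    funext n
    rw [natCoe_apply]
    norm_cast
  rw [h, conv_coe, ← dR_eq_zeta_mul_zeta]
  rfl

lemma dR_nonneg (n : ℕ) : 0 ≤ dR n := by
  rw [dR_apply]; positivity

lemma pmul_le_mul (n : ℕ) :
    (ArithmeticFunction.pmul dR dR) n ≤ (dR * dR) n := by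
  rcases eq_or_ne n 0 with rfl | hn
  · simp
  rw [← key, ArithmeticFunction.mul_apply]
  have hmem : ((1 : ℕ), n) ∈ n.divisorsAntidiagonal := by
    rw [Nat.mem_divisorsAntidiagonal]
    exact ⟨one_mul n, hn⟩
  have := Finset.single_le_sum
    (f := fun p : ℕ × ℕ => sqR p.1 * ArithmeticFunction.pmul dR dR p.2)
    (fun p _ => mul_nonneg (sqR_nonneg p.1)
      (by rw [ArithmeticFunction.pmul_apply]; exact mul_nonneg (dR_nonneg _) (dR_nonneg _)))
    hmem
  simpa [sqR_isMultiplicative.1] using this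

lemma mul_nonneg' (n : ℕ) : 0 ≤ (dR * dR) n := by
  rw [ArithmeticFunction.mul_apply]
  exact Finset.sum_nonneg fun p _ => mul_nneg0 p
where mul_nneg0 (p : ℕ × ℕ) : 0 ≤ dR p.1 * dR p.2 := mul_nonneg (dR_nonneg _) (dR_nonneg _)

end DSq

open DSq LSeries

/-- For every complex `s` with `Re(s) > 1`,
`∑_{n ≥ 1} d(n)²/n^s = ζ(s)⁴/ζ(2s)`. -/
theorem dirichlet_series_divisor_squared (s : ℂ) (hs : 1 < s.re) :
    ∑' n : ℕ+, (((n : ℕ).divisors.card : ℂ)) ^ 2 / ((n : ℕ) : ℂ) ^ s =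
      riemannZeta s ^ 4 / riemannZeta (2 * s) := by
  have h2s : (2 * s).re = 2 * s.re := by simp
  have h2s1 : 1 < (2 * s).re := by rw [h2s]; linarith
  -- summabilities
  have hz : LSeriesSummable (↗(ζ : ArithmeticFunction ℕ)) s :=
    ArithmeticFunction.LSeriesSummable_zeta_iff.mpr hs
  have hDsum : LSeriesSummable Dc s := by
    rw [Dc_eq_conv]; exact hz.convolution hz
  have hDval : LSeries Dc s = riemannZeta s ^ 2 := by
    rw [Dc_eq_conv, LSeries_convolution' hz hz,
      ArithmeticFunction.LSeries_zeta_eq_riemannZeta hs, sq]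
  have hGsum : LSeriesSummable Gc s := by
    refine LSeriesSummable_of_bounded_of_one_lt_re (m := 1) (fun n _ => ?_) hs
    simp only [Gc, sqR_apply]
    split <;> simp
  have hFsum : LSeriesSummable Fc s := by
    have hX : LSeriesSummable (Dc ⍟ Dc) s := hDsum.convolution hDsum
    refine Summable.of_norm_bounded (g := fun n => ‖term (Dc ⍟ Dc) s n‖)
      (summable_norm_iff.mpr hX) fun n => ?_
    refine norm_term_le s ?_
    have hDD : (Dc ⍟ Dc) n = (((dR * dR) n : ℝ) : ℂ) := by
      rw [show Dc = fun n => ((dR n : ℝ) : ℂ) from rfl, conv_coe]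
    have hpm : (0:ℝ) ≤ (ArithmeticFunction.pmul dR dR) n := by
      rw [ArithmeticFunction.pmul_apply]
      exact mul_nonneg (dR_nonneg _) (dR_nonneg _)
    rw [hDD, show Fc n = (((ArithmeticFunction.pmul dR dR) n : ℝ) : ℂ) from rfl,
      Complex.norm_real, Complex.norm_real, Real.norm_of_nonneg (mul_nonneg' n),
      Real.norm_of_nonneg hpm]
    exact pmul_le_mul n
  -- the L-series of the square indicator is ζ(2s)
  have hGval : LSeries Gc s = riemannZeta (2 * s) := by
    rw [← ArithmeticFunction.LSeries_zeta_eq_riemannZeta h2s1]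
    have hinj : Function.Injective (fun n : ℕ => n ^ 2) :=
      Nat.pow_left_injective (by norm_num)
    have hsupp : Function.support (term Gc s) ⊆ Set.range (fun n : ℕ => n ^ 2) := by
      intro x hx
      have hx0 : x ≠ 0 := by
        rintro rfl; exact hx (term_zero ..)
      have hGx : Gc x ≠ 0 := by
        intro h
        exact hx (by rw [term_of_ne_zero hx0, h, zero_div])
      have hsq : IsSquare x := by
        by_contra hc
        exact hGx (by simp [Gc, sqR_apply, hc])
      obtain ⟨r, hr⟩ := hsq
      exact ⟨r, by rw [hr]; ring⟩
    have := Function.Injective.tsum_eq (f := term Gc s) hinj hsupp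
    rw [LSeries, ← this]
    refine tsum_congr fun n => ?_
    rcases eq_or_ne n 0 with rfl | hn
    · simp
    have hn2 : n ^ 2 ≠ 0 := pow_ne_zero 2 hn
    rw [term_of_ne_zero hn2, term_of_ne_zero hn]
    have hGn : Gc (n ^ 2) = 1 := by
      simp [Gc, sqR_apply, hn2, hn, (isSquare_iff_exists_sq (n ^ 2)).mpr ⟨n, rfl⟩]
    have hzn : ((ζ : ArithmeticFunction ℕ) n : ℂ) = 1 := by
      simp [ArithmeticFunction.zeta_apply, hn]
    rw [hGn, hzn]
    congr 1
    rw [show ((2 : ℂ) * s) = ((2 : ℕ) : ℂ) * s by norm_num,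
      Complex.natCast_cpow_natCast_mul]
    norm_cast
  -- the left-hand side is the L-series of Fc
  have hLHS : (∑' n : ℕ+, (((n : ℕ).divisors.card : ℂ)) ^ 2 / ((n : ℕ) : ℂ) ^ s) =
      LSeries Fc s := by
    have hsupp : Function.support (term Fc s) ⊆ Set.range ((↑) : ℕ+ → ℕ) := by
      intro x hx
      have hx0 : x ≠ 0 := by rintro rfl; exact hx (term_zero ..)
      exact ⟨⟨x, Nat.pos_of_ne_zero hx0⟩, rfl⟩
    rw [LSeries, ← Function.Injective.tsum_eq (f := term Fc s) PNat.coe_injective hsupp]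
    refine tsum_congr fun n => ?_
    rw [term_of_ne_zero n.pos.ne']
    congr 1
    show (((n : ℕ).divisors.card : ℂ)) ^ 2 = (((ArithmeticFunction.pmul dR dR) (n : ℕ) : ℝ) : ℂ)
    rw [ArithmeticFunction.pmul_apply, dR_apply]
    push_cast
    ring
  have hζ2 : riemannZeta (2 * s) ≠ 0 := riemannZeta_ne_zero_of_one_lt_re h2s1
  have hMain : riemannZeta (2 * s) * LSeries Fc s = riemannZeta s ^ 4 := by
    rw [← hGval, ← LSeries_convolution' hGsum hFsum, conv_key,
      LSeries_convolution' hDsum hDsum, hDval]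
    ring
  rw [hLHS, eq_div_iff hζ2]
  linear_combination hMain
end

section
/- For every positive integer n, d(n²) = ∑_{d : d² | n} μ(d)·d₃(n/d²), where the sum runs over all positive integers d whose square divides n. -/
/-- `d₃(n)`: the number of ordered triples `(d₁, d₂, d₃)` of positive integers with
`d₁·d₂·d₃ = n`. -/
def d3 (n : ℕ) : ℕ :=
  ((n.divisors ×ˢ n.divisors ×ˢ n.divisors).filter
    fun p => p.1 * p.2.1 * p.2.2 = n).card


open ArithmeticFunction Finset
open scoped ArithmeticFunction.zeta ArithmeticFunction.Moebius

lemma d3_eq_sum (n : ℕ) (hn : n ≠ 0) : d3 n = ∑ i ∈ n.divisors, i.divisors.card := by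
  have key : ∀ a ∈ n.divisors,
      ((n.divisors ×ˢ n.divisors).filter fun q : ℕ × ℕ => a * q.1 * q.2 = n)
        = (n / a).divisorsAntidiagonal := by
    intro a ha
    rw [Nat.mem_divisors] at ha
    obtain ⟨⟨m, rfl⟩, h0⟩ := ha
    have ha0 : a ≠ 0 := left_ne_zero_of_mul h0
    have hm0 : m ≠ 0 := right_ne_zero_of_mul h0
    ext ⟨b, c⟩
    simp only [Finset.mem_filter, Finset.mem_product, Nat.mem_divisors,
      Nat.mem_divisorsAntidiagonal, Nat.mul_div_cancel_left _ (Nat.pos_of_ne_zero ha0)]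
    constructor
    · rintro ⟨⟨⟨hb, -⟩, ⟨hc, -⟩⟩, h⟩
      refine ⟨?_, hm0⟩
      apply Nat.eq_of_mul_eq_mul_left (Nat.pos_of_ne_zero ha0)
      rw [← mul_assoc]; exact h
    · rintro ⟨rfl, -⟩
      exact ⟨⟨⟨⟨a * c, by ring⟩, h0⟩, ⟨⟨a * b, by ring⟩, h0⟩⟩, by ring⟩
  unfold d3
  rw [Finset.card_filter]
  rw [Finset.sum_product]
  calc (∑ a ∈ n.divisors, ∑ q ∈ n.divisors ×ˢ n.divisors,
        if a * q.1 * q.2 = n then 1 else 0)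
      = ∑ a ∈ n.divisors, (n / a).divisors.card := by
        refine Finset.sum_congr rfl fun a ha => ?_
        rw [← Finset.card_filter, key a ha, ← Nat.map_div_right_divisors, Finset.card_map]
    _ = ∑ i ∈ n.divisors, i.divisors.card := Nat.sum_div_divisors n (fun i => i.divisors.card)

noncomputable def T : ArithmeticFunction ℤ := (ζ : ArithmeticFunction ℤ) * ((ζ : ArithmeticFunction ℤ) * (ζ : ArithmeticFunction ℤ))

lemma T_mult : T.IsMultiplicative :=
  (isMultiplicative_zeta.natCast).mul ((isMultiplicative_zeta.natCast).mul isMultiplicative_zeta.natCast)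

lemma zz_apply (n : ℕ) (hn : n ≠ 0) :
    ((ζ : ArithmeticFunction ℤ) * (ζ : ArithmeticFunction ℤ)) n = (n.divisors.card : ℤ) := by
  rw [coe_zeta_mul_apply]
  rw [Finset.card_eq_sum_ones, Nat.cast_sum]
  refine Finset.sum_congr rfl fun i hi => ?_
  have : i ≠ 0 := (Nat.pos_of_mem_divisors hi).ne'
  simp [natCoe_apply, this]

lemma T_apply (n : ℕ) (hn : n ≠ 0) : T n = ∑ i ∈ n.divisors, (i.divisors.card : ℤ) := by
  rw [T, coe_zeta_mul_apply]
  exact Finset.sum_congr rfl fun i hi => zz_apply i (Nat.pos_of_mem_divisors hi).ne'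

lemma T_pp {p : ℕ} (hp : p.Prime) (m : ℕ) :
    T (p ^ m) = ∑ i ∈ Finset.range (m + 1), ((i : ℤ) + 1) := by
  rw [T_apply _ (pow_ne_zero m hp.ne_zero), Nat.sum_divisors_prime_pow hp]
  refine Finset.sum_congr rfl fun i _ => ?_
  rw [← ArithmeticFunction.sigma_zero_apply, sigma_zero_apply_prime_pow hp]
  push_cast; ring

def g : ArithmeticFunction ℤ :=
  ⟨fun n => if n.sqrt ^ 2 = n then μ n.sqrt else 0, by simp⟩

lemma g_apply_sq (d : ℕ) : g (d ^ 2) = μ d := by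
  simp [g, Nat.sqrt_eq']

lemma g_apply_not_sq {n : ℕ} (h : ¬ IsSquare n) : g n = 0 := by
  rw [show g n = if n.sqrt ^ 2 = n then μ n.sqrt else 0 from rfl, if_neg]
  intro hc
  exact h ⟨n.sqrt, by rw [← pow_two]; exact hc.symm⟩

lemma isSquare_iff_sqrt {n : ℕ} : n.sqrt ^ 2 = n ↔ IsSquare n := by
  constructor
  · intro h; exact ⟨n.sqrt, by rw [← pow_two]; exact h.symm⟩
  · rintro ⟨c, rfl⟩; rw [← pow_two, Nat.sqrt_eq']

lemma g_mult : g.IsMultiplicative := by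
  constructor
  · simp [g]
  · intro m n hmn
    by_cases hm : IsSquare m
    · by_cases hn : IsSquare n
      · obtain ⟨a, rfl⟩ := hm
        obtain ⟨b, rfl⟩ := hn
        rw [← pow_two, ← pow_two, ← mul_pow, g_apply_sq, g_apply_sq, g_apply_sq]
        exact isMultiplicative_moebius.map_mul_of_coprime
          ((Nat.Coprime.coprime_dvd_left ⟨a, by ring⟩ hmn).coprime_dvd_right ⟨b, by ring⟩)
      · rw [g_apply_not_sq hn, mul_zero, g_apply_not_sq]
        intro ⟨c, hc⟩
        apply hn
        have hu : IsUnit (gcd n m) := by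
          rw [Nat.isUnit_iff, gcd_comm]; exact hmn
        obtain ⟨d, hd⟩ := exists_eq_pow_of_mul_eq_pow (k := 2) hu
          (show n * m = c ^ 2 by rw [mul_comm, hc]; ring)
        exact ⟨d, by rw [hd]; ring⟩
    · rw [g_apply_not_sq hm, zero_mul, g_apply_not_sq]
      intro ⟨c, hc⟩
      apply hm
      have : IsUnit (gcd m n) := by
        rw [Nat.isUnit_iff]; exact hmn
      obtain ⟨d, hd⟩ := exists_eq_pow_of_mul_eq_pow (k := 2) this (by rw [hc]; ring)
      exact ⟨d, by rw [hd]; ring⟩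

lemma g_prime_pow {p : ℕ} (hp : p.Prime) (i : ℕ) :
    g (p ^ i) = if i = 0 then 1 else if i = 2 then -1 else 0 := by
  rcases Nat.even_or_odd i with ⟨j, rfl⟩ | hodd
  · rw [show j + j = 2 * j by ring, show p ^ (2 * j) = (p ^ j) ^ 2 by rw [pow_mul]; ring,
      g_apply_sq]
    rcases Nat.eq_zero_or_pos j with rfl | hj
    · simp
    rcases eq_or_lt_of_le (show 1 ≤ j from hj) with rfl | hj2
    · simp [moebius_apply_prime hp]
    rw [moebius_apply_prime_pow hp hj.ne', if_neg (show ¬ j = 1 by omega),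
      if_neg (show ¬ 2 * j = 0 by omega), if_neg (show ¬ 2 * j = 2 by omega)]
  · obtain ⟨k, rfl⟩ := hodd
    rw [g_apply_not_sq, if_neg (by omega), if_neg (by omega)]
    rintro ⟨c, hc⟩
    have hc0 : c ≠ 0 := by
      rintro rfl
      simp at hc
      exact hp.ne_zero hc
    have h1 : (p ^ (2 * k + 1)).factorization p = 2 * k + 1 := by
      simp [hp.factorization_pow]
    have h2 : (p ^ (2 * k + 1)).factorization p = 2 * c.factorization p := by
      rw [hc, ← pow_two, Nat.factorization_pow]
      simp [mul_comm]
    omega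

lemma T_eq_d3 (m : ℕ) (hm : m ≠ 0) : T m = (d3 m : ℤ) := by
  rw [T_apply m hm, d3_eq_sum m hm]
  push_cast
  rfl

lemma conv_eq (n : ℕ) (hn : n ≠ 0) :
    (g * T) n = ∑ d ∈ n.divisors.filter (fun d => d ^ 2 ∣ n), μ d * ((d3 (n / d ^ 2) : ℤ)) := by
  rw [ArithmeticFunction.mul_apply, Nat.sum_divisorsAntidiagonal (f := fun e f => g e * T f)]
  rw [← Finset.sum_filter_of_ne (p := fun e => e.sqrt ^ 2 = e)
    (fun x hx hfx => by
      by_contra hns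
      rw [g_apply_not_sq (fun hs => hns (isSquare_iff_sqrt.mpr hs)), zero_mul] at hfx
      exact hfx rfl)]
  refine Finset.sum_nbij' Nat.sqrt (fun d => d ^ 2) ?_ ?_ ?_ ?_ ?_
  · intro e he
    rw [Finset.mem_filter] at he ⊢
    obtain ⟨hed, hsq⟩ := he
    rw [Nat.mem_divisors] at hed ⊢
    have hse : e.sqrt ∣ e := ⟨e.sqrt, by rw [← pow_two]; exact hsq.symm⟩
    refine ⟨⟨hse.trans hed.1, hn⟩, ?_⟩
    rw [hsq]; exact hed.1
  · intro d hd
    rw [Finset.mem_filter] at hd ⊢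
    obtain ⟨hdd, hsq⟩ := hd
    refine ⟨Nat.mem_divisors.mpr ⟨hsq, hn⟩, ?_⟩
    rw [Nat.sqrt_eq']
  · intro e he
    rw [Finset.mem_filter] at he
    exact he.2
  · intro d hd
    exact Nat.sqrt_eq' d
  · intro e he
    rw [Finset.mem_filter, Nat.mem_divisors] at he
    obtain ⟨⟨hed, -⟩, hsq⟩ := he
    have he0 : e ≠ 0 := by
      rintro rfl
      rw [zero_dvd_iff] at hed
      exact hn hed
    rw [show g e = μ e.sqrt by rw [← g_apply_sq e.sqrt, hsq], hsq]
    congr 1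
    exact T_eq_d3 _ (Nat.div_pos (Nat.le_of_dvd (Nat.pos_of_ne_zero hn) hed)
      (Nat.pos_of_ne_zero he0)).ne'

lemma conv_pp {p k : ℕ} (hp : p.Prime) (hk : 0 < k) :
    (g * T) (p ^ k) = 2 * (k : ℤ) + 1 := by
  rw [ArithmeticFunction.mul_apply, Nat.sum_divisorsAntidiagonal (f := fun e f => g e * T f),
    Nat.sum_divisors_prime_pow hp]
  have hdiv : ∀ i ∈ Finset.range (k + 1), p ^ k / p ^ i = p ^ (k - i) := by
    intro i hi
    have := Finset.mem_range.mp hi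
    rw [Nat.pow_div (by omega) hp.pos]
  have step : ∀ i ∈ Finset.range (k + 1), g (p ^ i) * T (p ^ k / p ^ i)
      = (if i = 0 then T (p ^ k) else if i = 2 then -T (p ^ (k - 2)) else 0) := by
    intro i hi
    rw [hdiv i hi, g_prime_pow hp]
    split_ifs with h0 h2
    · subst h0; simp
    · subst h2; ring
    · ring
  rw [Finset.sum_congr rfl step]
  rcases eq_or_lt_of_le (show 1 ≤ k from hk) with rfl | hk2
  · rw [Finset.sum_range_succ, Finset.sum_range_succ, Finset.sum_range_zero]
    have h3 := T_pp hp 1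
    norm_num [Finset.sum_range_succ, pow_one] at h3
    norm_num [h3]
  · rw [← Finset.sum_subset
      (show ({0, 2} : Finset ℕ) ⊆ Finset.range (k + 1) by
        intro x hx
        simp only [Finset.mem_insert, Finset.mem_singleton] at hx
        rw [Finset.mem_range]
        omega)
      (fun x _ hx => by
        simp only [Finset.mem_insert, Finset.mem_singleton, not_or] at hx
        rw [if_neg hx.1, if_neg hx.2])]
    rw [Finset.sum_pair (by norm_num : (0 : ℕ) ≠ 2)]
    rw [if_pos rfl, if_neg (by norm_num), if_pos rfl]
    obtain ⟨j, rfl⟩ : ∃ j, k = j + 2 := ⟨k - 2, by omega⟩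
    rw [T_pp hp, T_pp hp]
    have h1 : j + 2 + 1 = (j + 1) + 2 := by ring
    have h2 : j + 2 - 2 = j := by omega
    rw [h1, h2, Finset.sum_range_succ, Finset.sum_range_succ]
    push_cast
    ring

/-- For every positive integer `n`,
`d(n²) = ∑_{d² ∣ n} μ(d)·d₃(n/d²)`, the sum running over positive integers `d` whose
square divides `n`. -/
theorem divisor_of_sq_eq_sum_moebius_d3 (n : ℕ) (hn : 0 < n) :
    (((n ^ 2).divisors.card : ℤ)) =
      ∑ d ∈ n.divisors.filter (fun d => d ^ 2 ∣ n),
        ArithmeticFunction.moebius d * (d3 (n / d ^ 2) : ℤ) := by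
  have key : ∀ m : ℕ, 0 < m → (((m ^ 2).divisors.card : ℤ)) = (g * T) m := by
    intro m
    induction m using Nat.recOnPosPrimePosCoprime with
    | prime_pow p k hpp hk =>
      intro _
      have hp' : p.Prime := hpp
      rw [← pow_mul, ← ArithmeticFunction.sigma_zero_apply,
        sigma_zero_apply_prime_pow hp', conv_pp hp' hk]
      push_cast
      ring
    | zero => intro h; exact absurd h (lt_irrefl 0)
    | one =>
      intro _
      rw [(g_mult.mul T_mult).map_one]
      norm_num
    | coprime a b ha hb hab iha ihb =>
      intro _
      have hA : 0 < a := by omega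
      have hB : 0 < b := by omega
      rw [mul_pow, ← ArithmeticFunction.sigma_zero_apply,
        isMultiplicative_sigma.map_mul_of_coprime (hab.pow _ _),
        (g_mult.mul T_mult).map_mul_of_coprime hab,
        ArithmeticFunction.sigma_zero_apply, ArithmeticFunction.sigma_zero_apply]
      push_cast
      rw [iha hA, ihb hB]
  rw [key n hn, conv_eq n hn.ne']
end

section
/- The limit superior, as the positive integer n tends to infinity, of (log d(n) · log log n)/(log n) equals log 2. -/
open Filter Finset Real

namespace Wigert


lemma card_divisors_prod_primes (s : Finset ℕ) (hs : ∀ p ∈ s, p.Prime) :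
    (∏ p ∈ s, p).divisors.card = 2 ^ s.card := by
  classical
  induction s using Finset.induction_on with
  | empty => simp
  | @insert a s ha ih =>
    have hap : a.Prime := hs a (mem_insert_self a s)
    have hcop : a.Coprime (∏ p ∈ s, p) := by
      apply Nat.Coprime.prod_right
      intro q hq
      exact (Nat.coprime_primes hap (hs q (mem_insert_of_mem hq))).mpr
        (fun h => ha (h ▸ hq))
    rw [Finset.prod_insert ha, hcop.card_divisors_mul, hap.divisors,
      Finset.card_insert_of_notMem ha, ih (fun p hp => hs p (mem_insert_of_mem hp))]
    rw [Finset.card_insert_of_notMem (by simp [hap.one_lt.ne]), Finset.card_singleton]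
    ring


def P (k : ℕ) : Finset ℕ := (Finset.range (2*k+1)).filter Nat.Prime

noncomputable def Nk (k : ℕ) : ℕ := ∏ p ∈ P k, p

lemma P_prime {k p : ℕ} (hp : p ∈ P k) : p.Prime := (Finset.mem_filter.mp hp).2

lemma P_le {k p : ℕ} (hp : p ∈ P k) : p ≤ 2*k := by
  have := (Finset.mem_filter.mp hp).1; simp only [Finset.mem_range] at this; omega

lemma Nk_ne_zero (k : ℕ) : Nk k ≠ 0 :=
  Finset.prod_ne_zero_iff.mpr fun p hp => (P_prime hp).ne_zero

lemma lt_Nk (k : ℕ) (hk : k ≠ 0) : k < Nk k := by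
  obtain ⟨p, hp, hkp, hp2k⟩ := Nat.exists_prime_lt_and_le_two_mul k hk
  have hpP : p ∈ P k := Finset.mem_filter.mpr ⟨Finset.mem_range.mpr (by omega), hp⟩
  have : p ∣ Nk k := Finset.dvd_prod_of_mem _ hpP
  exact lt_of_lt_of_le hkp (Nat.le_of_dvd (Nat.pos_of_ne_zero (Nk_ne_zero k)) this)

-- θ k = log (Nk k) = ∑ log p
lemma log_Nk (k : ℕ) : Real.log (Nk k) = ∑ p ∈ P k, Real.log p := by
  rw [Nk, Nat.cast_prod, Real.log_prod]
  intro p hp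
  exact_mod_cast (P_prime hp).ne_zero

lemma theta_ge (k : ℕ) : Real.log 2 * (P k).card ≤ Real.log (Nk k) := by
  calc Real.log 2 * (P k).card = ∑ _p ∈ P k, Real.log 2 := by
        rw [Finset.sum_const, nsmul_eq_mul, mul_comm]
    _ ≤ ∑ p ∈ P k, Real.log p := by
        apply Finset.sum_le_sum
        intro p hp
        exact Real.log_le_log (by norm_num) (by exact_mod_cast (P_prime hp).two_le)
    _ = Real.log (Nk k) := (log_Nk k).symm

lemma theta_le (k : ℕ) : Real.log (Nk k) ≤ (P k).card * Real.log (2*k+1) := by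
  calc Real.log (Nk k) = ∑ p ∈ P k, Real.log p := log_Nk k
    _ ≤ ∑ _p ∈ P k, Real.log (2*k+1) := by
        apply Finset.sum_le_sum
        intro p hp
        apply Real.log_le_log (by exact_mod_cast (P_prime hp).pos)
        have := P_le hp
        push_cast
        exact_mod_cast by push_cast; linarith [ (show ((p:ℝ)) ≤ 2*k by exact_mod_cast this) ]
    _ = (P k).card * Real.log (2*k+1) := by rw [Finset.sum_const, nsmul_eq_mul]

lemma centralBinom_le (k : ℕ) (hk : 0 < k) :
    Nat.centralBinom k ≤ (2*k) ^ (P k).card := by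
  have hne : Nat.centralBinom k ≠ 0 := Nat.centralBinom_ne_zero k
  have hpf : (Nat.centralBinom k).primeFactors ⊆ P k := by
    intro p hp
    have hprime : p.Prime := Nat.prime_of_mem_primeFactors hp
    have h1 : 1 ≤ (Nat.centralBinom k).factorization p :=
      (Nat.Prime.pow_dvd_iff_le_factorization hprime hne).mp
        (by simpa using Nat.dvd_of_mem_primeFactors hp)
    have hle : p ^ (Nat.centralBinom k).factorization p ≤ 2 * k := by
      unfold Nat.centralBinom
      exact Nat.pow_factorization_choose_le (by omega)
    have : p ≤ 2 * k := le_trans (Nat.le_self_pow (by omega) p) hle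
    simp only [P, mem_filter, mem_range]
    exact ⟨by omega, hprime⟩
  calc Nat.centralBinom k
      = ∏ p ∈ (Nat.centralBinom k).primeFactors,
          p ^ (Nat.centralBinom k).factorization p := by
        conv_lhs => rw [← Nat.factorization_prod_pow_eq_self hne]
        rfl
    _ ≤ ∏ _p ∈ (Nat.centralBinom k).primeFactors, 2 * k := by
        apply Finset.prod_le_prod'
        intro p hp
        unfold Nat.centralBinom
        exact Nat.pow_factorization_choose_le (by omega)
    _ = (2*k) ^ (Nat.centralBinom k).primeFactors.card := by
        rw [Finset.prod_const]
    _ ≤ (2*k) ^ (P k).card := by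
        apply Nat.pow_le_pow_right (by omega)
        exact Finset.card_le_card hpf

lemma cheb (k : ℕ) (hk : 0 < k) :
    4 ^ k ≤ (2*k) ^ ((P k).card + 1) := by
  calc (4:ℕ) ^ k ≤ 2 * k * Nat.centralBinom k :=
        Nat.four_pow_le_two_mul_self_mul_centralBinom k hk
    _ ≤ 2 * k * (2*k) ^ (P k).card := by
        exact Nat.mul_le_mul_left _ (centralBinom_le k hk)
    _ = (2*k) ^ ((P k).card + 1) := by ring


lemma cheb_real (k : ℕ) (hk : 1 ≤ k) :
    (k:ℝ) * Real.log 4 ≤ ((P k).card + 1) * Real.log (2*k) := by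
  have h := cheb k hk
  have h' : ((4:ℝ)) ^ k ≤ ((2*k:ℝ)) ^ ((P k).card + 1) := by exact_mod_cast h
  have h2 : Real.log ((4:ℝ) ^ k) ≤ Real.log (((2*k:ℝ)) ^ ((P k).card + 1)) :=
    Real.log_le_log (by positivity) h'
  rw [Real.log_pow, Real.log_pow] at h2
  push_cast at h2
  linarith

lemma pi_ge (k : ℕ) (hk : 2 ≤ k) :
    (k:ℝ) * Real.log 4 / Real.log (2*k) - 1 ≤ (P k).card := by
  have hlog : 0 < Real.log (2*k) := by
    apply Real.log_pos
    have : (2:ℝ) ≤ (k:ℝ) := by exact_mod_cast hk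
    linarith
  have h := cheb_real k (by omega)
  rw [sub_le_iff_le_add, div_le_iff₀ hlog]
  nlinarith [h, hlog]


lemma tendsto_log_div_rpow {r : ℝ} (hr : 0 < r) :
    Filter.Tendsto (fun x : ℝ => Real.log x / x ^ r) atTop (nhds 0) :=
  (isLittleO_log_rpow_atTop hr).tendsto_div_nhds_zero

lemma tendsto_y : Filter.Tendsto (fun k : ℕ => 2*(k:ℝ)+1) atTop atTop := by
  apply Filter.tendsto_atTop_add_const_right
  exact (tendsto_natCast_atTop_atTop).const_mul_atTop two_pos

lemma tendsto_T (δ : ℝ) (hδ : 0 < δ) :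
    Filter.Tendsto (fun k : ℕ =>
      ((2*(k:ℝ)+1) ^ (1-δ) * Real.log (2*k) + Real.log 2 * Real.log (2*k)) / k)
      atTop (nhds 0) := by
  have hcomp1 : Filter.Tendsto (fun k : ℕ => Real.log (2*(k:ℝ)+1) / (2*(k:ℝ)+1) ^ δ)
      atTop (nhds 0) := (tendsto_log_div_rpow hδ).comp tendsto_y
  have hcomp2 : Filter.Tendsto (fun k : ℕ => Real.log (2*(k:ℝ)+1) / (2*(k:ℝ)+1))
      atTop (nhds 0) := by
    have := (tendsto_log_div_rpow one_pos).comp tendsto_y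
    simpa [Function.comp_def, Real.rpow_one] using this
  have hupper : Filter.Tendsto (fun k : ℕ =>
      3 * (Real.log (2*(k:ℝ)+1) / (2*(k:ℝ)+1) ^ δ)
        + 3 * Real.log 2 * (Real.log (2*(k:ℝ)+1) / (2*(k:ℝ)+1))) atTop (nhds 0) := by
    have := (hcomp1.const_mul 3).add (hcomp2.const_mul (3 * Real.log 2))
    simpa using this
  apply tendsto_of_tendsto_of_tendsto_of_le_of_le' tendsto_const_nhds hupper
  · filter_upwards [Filter.eventually_ge_atTop 1] with k hk
    have hk0 : (0:ℝ) < k := by exact_mod_cast hk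
    have hk1 : (1:ℝ) ≤ k := by exact_mod_cast hk
    have hy1 : (1:ℝ) ≤ 2*(k:ℝ)+1 := by linarith
    have hL : 0 ≤ Real.log (2*(k:ℝ)) := Real.log_nonneg (by linarith)
    have hx0 : 0 ≤ (2*(k:ℝ)+1) ^ (1-δ) := Real.rpow_nonneg (by linarith) _
    have h2 : (0:ℝ) ≤ Real.log 2 := Real.log_nonneg (by norm_num)
    positivity
  · filter_upwards [Filter.eventually_ge_atTop 1] with k hk
    set y : ℝ := 2*(k:ℝ)+1 with hy
    have hk0 : (0:ℝ) < k := by exact_mod_cast hk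
    have hk1 : (1:ℝ) ≤ k := by exact_mod_cast hk
    have hy0 : (0:ℝ) < y := by rw [hy]; linarith
    have hyd : (0:ℝ) < y ^ δ := Real.rpow_pos_of_pos hy0 δ
    have hL0 : 0 ≤ Real.log (2*(k:ℝ)) := Real.log_nonneg (by push_cast; linarith)
    have hLy : Real.log (2*(k:ℝ)) ≤ Real.log y := by
      apply Real.log_le_log (by push_cast; linarith)
      rw [hy]; linarith
    have hLy0 : 0 ≤ Real.log y := le_trans hL0 hLy
    have hx : y ^ (1-δ) = y / y ^ δ := by
      rw [Real.rpow_sub hy0, Real.rpow_one]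
    have hyk : y ≤ 3 * k := by rw [hy]; linarith
    have hx0 : 0 ≤ y ^ (1-δ) := Real.rpow_nonneg hy0.le _
    set a : ℝ := Real.log y with ha
    set b : ℝ := y ^ δ with hb
    set L : ℝ := Real.log (2*(k:ℝ)) with hL
    have h2 : (0:ℝ) ≤ Real.log 2 := Real.log_nonneg (by norm_num)
    have hb1 : b ≠ 0 := hyd.ne'
    have key1 : y ^ (1-δ) * L / k ≤ 3 * (a / b) := by
      have e : y ^ (1-δ) * L / k = y * L / (b * k) := by
        rw [hx]; field_simp; try ring
      rw [e]
      have step : y * L / (b * k) ≤ 3 * k * a / (b * k) := by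
        apply div_le_div_of_nonneg_right ?_ (by positivity) |>.trans_eq rfl
        calc y * L ≤ (3*k) * a := by
              apply mul_le_mul hyk hLy hL0 (by positivity)
          _ = 3 * k * a := by ring
      refine step.trans_eq ?_
      field_simp
    have key2 : Real.log 2 * L / k ≤ 3 * Real.log 2 * (a / y) := by
      rw [div_le_iff₀ hk0,
        show (3:ℝ) * Real.log 2 * (a/y) * k = 3 * Real.log 2 * a * k / y from by ring,
        le_div_iff₀ hy0]
      nlinarith [mul_le_mul (mul_le_mul_of_nonneg_left hLy h2) hyk (by linarith) (by positivity)]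
    calc (y ^ (1-δ) * L + Real.log 2 * L) / k
        = y ^ (1-δ) * L / k + Real.log 2 * L / k := by ring
      _ ≤ 3 * (a / b) + 3 * Real.log 2 * (a / y) := add_le_add key1 key2


lemma ev_ineq (δ : ℝ) (hδ : 0 < δ) :
    ∀ᶠ k : ℕ in atTop,
      (2*(k:ℝ)+1) ^ (1-δ) ≤ Real.log 2 * ((k:ℝ) * Real.log 4 / Real.log (2*k) - 1) := by
  have hc : 0 < Real.log 2 * Real.log 4 :=
    mul_pos (Real.log_pos one_lt_two) (Real.log_pos (by norm_num))
  have hev := (tendsto_T δ hδ).eventually_lt_const hc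
  filter_upwards [hev, Filter.eventually_ge_atTop 2] with k hTk hk2
  have hk2' : (2:ℝ) ≤ k := by exact_mod_cast hk2
  have hk0 : (0:ℝ) < k := by linarith
  have hL : 0 < Real.log (2*(k:ℝ)) := Real.log_pos (by linarith)
  rw [div_lt_iff₀ hk0] at hTk
  have heq : Real.log 2 * ((k:ℝ) * Real.log 4 / Real.log (2*(k:ℝ)) - 1)
      = (Real.log 2 * Real.log 4 * k - Real.log 2 * Real.log (2*(k:ℝ)))
          / Real.log (2*(k:ℝ)) := by
    rw [eq_div_iff hL.ne']
    have hX : (k:ℝ) * Real.log 4 / Real.log (2*(k:ℝ)) * Real.log (2*(k:ℝ)) = k * Real.log 4 :=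
      div_mul_cancel₀ _ hL.ne'
    linear_combination Real.log 2 * hX
  rw [heq, le_div_iff₀ hL]
  linarith

lemma lower_freq (ε : ℝ) (hε : 0 < ε) :
    ∃ᶠ n : ℕ in atTop, Real.log 2 - ε ≤
      Real.log (n.divisors.card) * Real.log (Real.log n) / Real.log n := by
  have hlog2 : 0 < Real.log 2 := Real.log_pos one_lt_two
  set δ := ε / Real.log 2 with hδdef
  have hδ : 0 < δ := div_pos hε hlog2
  have hkey : ∀ᶠ k : ℕ in atTop, Real.log 2 - ε ≤
      Real.log ((Nk k).divisors.card) * Real.log (Real.log (Nk k)) / Real.log (Nk k) := by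
    filter_upwards [ev_ineq δ hδ, Filter.eventually_ge_atTop 2] with k hE hk2
    have hk0 : (0:ℝ) < k := by
      have : (2:ℝ) ≤ k := by exact_mod_cast hk2
      linarith
    have hπ2 : 2 ≤ (P k).card := by
      have hsub : ({2, 3} : Finset ℕ) ⊆ P k := by
        intro p hp
        simp only [Finset.mem_insert, Finset.mem_singleton] at hp
        rcases hp with rfl | rfl
        · exact Finset.mem_filter.mpr ⟨Finset.mem_range.mpr (by omega), Nat.prime_two⟩
        · exact Finset.mem_filter.mpr ⟨Finset.mem_range.mpr (by omega), Nat.prime_three⟩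
      calc 2 = ({2, 3} : Finset ℕ).card := by decide
        _ ≤ (P k).card := Finset.card_le_card hsub
    have hπ0 : (0:ℝ) < ((P k).card : ℝ) := by exact_mod_cast by omega
    set θ := Real.log (Nk k) with hθdef
    set pc := ((P k).card : ℝ) with hπdef
    have hθ_lb : Real.log 2 * pc ≤ θ := theta_ge k
    have hθ_ub : θ ≤ pc * Real.log (2*k+1) := theta_le k
    have hθpos : 0 < θ := by nlinarith
    have hθ1 : 1 < θ := by
      have h4 : 1 < Real.log 4 := by
        rw [Real.lt_log_iff_exp_lt (by norm_num)]
        calc Real.exp 1 < 2.7182818286 := Real.exp_one_lt_d9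
          _ < 4 := by norm_num
      have h42 : Real.log 4 = 2 * Real.log 2 := by
        rw [show (4:ℝ) = 2^2 by norm_num, Real.log_pow]
        push_cast; ring
      have hπ2' : (2:ℝ) ≤ pc := by rw [hπdef]; exact_mod_cast hπ2
      nlinarith
    have hlogθ0 : 0 < Real.log θ := Real.log_pos hθ1
    have hθx : (2*(k:ℝ)+1) ^ (1-δ) ≤ θ := by
      refine hE.trans (le_trans ?_ hθ_lb)
      exact mul_le_mul_of_nonneg_left (pi_ge k hk2) hlog2.le
    have h2k1 : (0:ℝ) < 2*(k:ℝ)+1 := by linarith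
    have hlogθ : (1-δ) * Real.log (2*(k:ℝ)+1) ≤ Real.log θ := by
      rw [← Real.log_rpow h2k1]
      exact Real.log_le_log (Real.rpow_pos_of_pos h2k1 _) hθx
    have hlog2k1 : 0 < Real.log (2*(k:ℝ)+1) := Real.log_pos (by linarith)
    have hcard : (Nk k).divisors.card = 2 ^ (P k).card :=
      card_divisors_prod_primes _ (fun p hp => P_prime hp)
    have hlogcard : Real.log ((Nk k).divisors.card) = pc * Real.log 2 := by
      rw [hcard]
      push_cast
      rw [Real.log_pow]
    calc Real.log 2 - ε = Real.log 2 * (1 - δ) := by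
          rw [hδdef]; field_simp
      _ ≤ Real.log 2 * (Real.log θ / Real.log (2*(k:ℝ)+1)) := by
          apply mul_le_mul_of_nonneg_left ?_ hlog2.le
          rw [le_div_iff₀ hlog2k1]
          linarith
      _ = (pc * Real.log 2) * Real.log θ / (pc * Real.log (2*(k:ℝ)+1)) := by
          field_simp
      _ ≤ (pc * Real.log 2) * Real.log θ / θ := by
          apply div_le_div_of_nonneg_left (by positivity) hθpos hθ_ub
      _ = Real.log ((Nk k).divisors.card) * Real.log (Real.log (Nk k)) / Real.log (Nk k) := by
          rw [hlogcard]
  rw [Filter.frequently_atTop]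
  intro M
  obtain ⟨K, hK⟩ := Filter.eventually_atTop.mp hkey
  set m := max (max M K) 2 with hm
  refine ⟨Nk m, ?_, hK m (by omega)⟩
  have := lt_Nk m (by omega)
  omega



lemma logd_le (n : ℕ) (hn : 3 ≤ n) (c : ℝ) (hc0 : 0 < c) (hc1 : c ≤ 1)
    (hL2 : Real.log n / Real.log 2 + 1 ≤ (Real.log n)^2) :
    Real.log (n.divisors.card) ≤
      ((Real.log n) ^ c + 1) * (2 * Real.log (Real.log n))
        + Real.log 2 * (Real.log n / (c * Real.log (Real.log n))) := by
  have hn0 : n ≠ 0 := by omega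
  set L : ℝ := Real.log n with hLdef
  have hL1 : 1 < L := by
    rw [hLdef, Real.lt_log_iff_exp_lt (by exact_mod_cast by omega : (0:ℝ) < n)]
    calc Real.exp 1 < 2.7182818286 := Real.exp_one_lt_d9
      _ ≤ 3 := by norm_num
      _ ≤ n := by exact_mod_cast hn
  have hL0 : 0 < L := by linarith
  have hLL : 0 < Real.log L := Real.log_pos hL1
  have hl2 : 0 < Real.log 2 := Real.log_pos one_lt_two
  -- log of divisor count as a sum
  have hlogd : Real.log (n.divisors.card) =
      ∑ p ∈ n.primeFactors, Real.log ((n.factorization p : ℝ) + 1) := by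
    rw [Nat.card_divisors hn0]
    rw [Nat.cast_prod, Real.log_prod (fun p hp => by positivity)]
    apply Finset.sum_congr rfl
    intro p hp
    push_cast
    ring_nf
  -- log n as a weighted sum over prime factors
  have hlogn : ∑ p ∈ n.primeFactors, (n.factorization p : ℝ) * Real.log p = L := by
    rw [hLdef]
    conv_rhs => rw [← Nat.factorization_prod_pow_eq_self hn0]
    rw [Finsupp.prod, Nat.support_factorization]
    rw [Nat.cast_prod, Real.log_prod (fun p hp => by
      have := (Nat.prime_of_mem_primeFactors hp).pos
      positivity)]
    apply Finset.sum_congr rfl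
    intro p hp
    rw [Nat.cast_pow, Real.log_pow]
  -- per-prime basic facts
  have hap_le : ∀ p ∈ n.primeFactors, (n.factorization p : ℝ) * Real.log p ≤ L := by
    intro p hp
    have hple : p ^ n.factorization p ≤ n := Nat.ordProj_le p hn0
    have h1 : ((p:ℝ)) ^ n.factorization p ≤ (n:ℝ) := by exact_mod_cast hple
    have hppos : (0:ℝ) < p := by exact_mod_cast (Nat.prime_of_mem_primeFactors hp).pos
    have := Real.log_le_log (by positivity) h1
    rwa [Real.log_pow] at this
  rw [hlogd, ← Finset.sum_filter_add_sum_filter_not n.primeFactors (fun p : ℕ => (p:ℝ) ≤ L ^ c)]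
  have hsmall : ∑ p ∈ n.primeFactors.filter (fun p : ℕ => (p:ℝ) ≤ L ^ c),
      Real.log ((n.factorization p : ℝ) + 1) ≤ (L ^ c + 1) * (2 * Real.log L) := by
    have hterm : ∀ p ∈ n.primeFactors.filter (fun p : ℕ => (p:ℝ) ≤ L ^ c),
        Real.log ((n.factorization p : ℝ) + 1) ≤ 2 * Real.log L := by
      intro p hp
      have hppf : p ∈ n.primeFactors := Finset.mem_of_mem_filter p hp
      have hpp : p.Prime := Nat.prime_of_mem_primeFactors hppf
      have hlogp : Real.log 2 ≤ Real.log p :=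
        Real.log_le_log (by norm_num) (by exact_mod_cast hpp.two_le)
      have hap := hap_le p hppf
      have hfn : (0:ℝ) ≤ (n.factorization p : ℝ) := by positivity
      have h2 : (n.factorization p : ℝ) ≤ L / Real.log 2 := by
        rw [le_div_iff₀ hl2]
        nlinarith
      calc Real.log ((n.factorization p : ℝ) + 1)
          ≤ Real.log (L / Real.log 2 + 1) := Real.log_le_log (by positivity) (by linarith)
        _ ≤ Real.log (L ^ 2) := Real.log_le_log (by positivity) hL2
        _ = 2 * Real.log L := by rw [Real.log_pow]; push_cast; ring
    calc ∑ p ∈ n.primeFactors.filter (fun p : ℕ => (p:ℝ) ≤ L ^ c),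
        Real.log ((n.factorization p : ℝ) + 1)
        ≤ (n.primeFactors.filter (fun p : ℕ => (p:ℝ) ≤ L ^ c)).card • (2 * Real.log L) :=
          Finset.sum_le_card_nsmul _ _ _ hterm
      _ = ((n.primeFactors.filter (fun p : ℕ => (p:ℝ) ≤ L ^ c)).card : ℝ) * (2 * Real.log L) := by
          rw [nsmul_eq_mul]
      _ ≤ (L ^ c + 1) * (2 * Real.log L) := by
          apply mul_le_mul_of_nonneg_right ?_ (by positivity)
          have hsub : n.primeFactors.filter (fun p : ℕ => (p:ℝ) ≤ L ^ c) ⊆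
              Finset.range (⌊L ^ c⌋₊ + 1) := by
            intro p hp
            have := (Finset.mem_filter.mp hp).2
            rw [Finset.mem_range, Nat.lt_succ_iff]
            exact Nat.le_floor this
          calc ((n.primeFactors.filter (fun p : ℕ => (p:ℝ) ≤ L ^ c)).card : ℝ)
              ≤ ((⌊L ^ c⌋₊ + 1 : ℕ) : ℝ) := by
                exact_mod_cast (Finset.card_le_card hsub).trans_eq (Finset.card_range _)
            _ ≤ L ^ c + 1 := by
                push_cast
                have := Nat.floor_le (show (0:ℝ) ≤ L ^ c by positivity)
                linarith
  have hlarge : ∑ p ∈ n.primeFactors.filter (fun p : ℕ => ¬ (p:ℝ) ≤ L ^ c),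
      Real.log ((n.factorization p : ℝ) + 1) ≤ Real.log 2 * (L / (c * Real.log L)) := by
    have hclL : 0 < c * Real.log L := by positivity
    have step1 : ∑ p ∈ n.primeFactors.filter (fun p : ℕ => ¬ (p:ℝ) ≤ L ^ c),
        Real.log ((n.factorization p : ℝ) + 1) ≤
        ∑ p ∈ n.primeFactors.filter (fun p : ℕ => ¬ (p:ℝ) ≤ L ^ c),
          (n.factorization p : ℝ) * Real.log 2 := by
      apply Finset.sum_le_sum
      intro p hp
      have h1 : n.factorization p + 1 ≤ 2 ^ n.factorization p :=
        Nat.succ_le_of_lt Nat.lt_two_pow_self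
      have h2 : ((n.factorization p : ℝ)) + 1 ≤ (2:ℝ) ^ n.factorization p := by
        exact_mod_cast h1
      calc Real.log ((n.factorization p : ℝ) + 1)
          ≤ Real.log ((2:ℝ) ^ n.factorization p) := Real.log_le_log (by positivity) h2
        _ = (n.factorization p : ℝ) * Real.log 2 := by rw [Real.log_pow]
    have step2 : ∑ p ∈ n.primeFactors.filter (fun p : ℕ => ¬ (p:ℝ) ≤ L ^ c),
        (n.factorization p : ℝ) ≤ L / (c * Real.log L) := by
      rw [le_div_iff₀ hclL, Finset.sum_mul]
      calc ∑ p ∈ n.primeFactors.filter (fun p : ℕ => ¬ (p:ℝ) ≤ L ^ c),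
          (n.factorization p : ℝ) * (c * Real.log L)
          ≤ ∑ p ∈ n.primeFactors.filter (fun p : ℕ => ¬ (p:ℝ) ≤ L ^ c),
            (n.factorization p : ℝ) * Real.log p := by
            apply Finset.sum_le_sum
            intro p hp
            have hpl : L ^ c < (p:ℝ) := lt_of_not_ge (Finset.mem_filter.mp hp).2
            have : c * Real.log L = Real.log (L ^ c) := (Real.log_rpow hL0 c).symm
            rw [this]
            apply mul_le_mul_of_nonneg_left ?_ (by positivity)
            exact Real.log_le_log (by positivity) hpl.le
        _ ≤ ∑ p ∈ n.primeFactors, (n.factorization p : ℝ) * Real.log p := by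
            apply Finset.sum_le_sum_of_subset_of_nonneg (Finset.filter_subset _ _)
            intro p hp _
            have hppos : (1:ℝ) ≤ p := by
              exact_mod_cast (Nat.prime_of_mem_primeFactors hp).one_lt.le
            have := Real.log_nonneg hppos
            positivity
        _ = L := hlogn
    calc ∑ p ∈ n.primeFactors.filter (fun p : ℕ => ¬ (p:ℝ) ≤ L ^ c),
        Real.log ((n.factorization p : ℝ) + 1)
        ≤ ∑ p ∈ n.primeFactors.filter (fun p : ℕ => ¬ (p:ℝ) ≤ L ^ c),
          (n.factorization p : ℝ) * Real.log 2 := step1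
      _ = (∑ p ∈ n.primeFactors.filter (fun p : ℕ => ¬ (p:ℝ) ≤ L ^ c),
          (n.factorization p : ℝ)) * Real.log 2 := by rw [Finset.sum_mul]
      _ ≤ (L / (c * Real.log L)) * Real.log 2 := by
          apply mul_le_mul_of_nonneg_right step2 hl2.le
      _ = Real.log 2 * (L / (c * Real.log L)) := by ring
  linarith


lemma upper_ev (ε : ℝ) (hε : 0 < ε) :
    ∀ᶠ n : ℕ in atTop,
      Real.log (n.divisors.card) * Real.log (Real.log n) / Real.log n ≤ Real.log 2 + ε := by
  have hl2 : 0 < Real.log 2 := Real.log_pos one_lt_two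
  set c := Real.log 2 / (Real.log 2 + ε/2) with hcdef
  have hden : 0 < Real.log 2 + ε/2 := by linarith
  have hc0 : 0 < c := by positivity
  have hc1 : c < 1 := by rw [hcdef, div_lt_one hden]; linarith
  have hcc : Real.log 2 / c = Real.log 2 + ε/2 := by
    rw [hcdef]
    field_simp
  have h1c : 0 < 1 - c := by linarith
  -- the error term tends to zero
  have hA : Filter.Tendsto (fun x : ℝ => (Real.log x)^2 / x ^ (1-c)) atTop (nhds 0) := by
    have := (isLittleO_log_rpow_rpow_atTop 2 h1c).tendsto_div_nhds_zero
    apply this.congr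
    intro x
    rw [show ((2:ℝ)) = ((2:ℕ):ℝ) by norm_num, Real.rpow_natCast]
  have hB : Filter.Tendsto (fun x : ℝ => (Real.log x)^2 / x) atTop (nhds 0) := by
    have := (isLittleO_log_rpow_rpow_atTop 2 one_pos).tendsto_div_nhds_zero
    apply this.congr
    intro x
    rw [show ((2:ℝ)) = ((2:ℕ):ℝ) by norm_num, Real.rpow_natCast, Real.rpow_one]
  have hphi : Filter.Tendsto (fun x : ℝ => (x ^ c + 1) * 2 * (Real.log x)^2 / x)
      atTop (nhds 0) := by
    have hsum := (hA.const_mul 2).add (hB.const_mul 2)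
    rw [show (2:ℝ) * 0 + 2 * 0 = 0 by ring] at hsum
    apply hsum.congr'
    filter_upwards [Filter.eventually_gt_atTop 0] with x hx
    have hxc : (0:ℝ) < x ^ c := Real.rpow_pos_of_pos hx c
    have hxs : x ^ (1-c) = x / x ^ c := by
      rw [Real.rpow_sub hx, Real.rpow_one]
    rw [hxs]
    field_simp
  have hL : Filter.Tendsto (fun n : ℕ => Real.log n) atTop atTop :=
    Real.tendsto_log_atTop.comp tendsto_natCast_atTop_atTop
  have hev1 := (hphi.comp hL).eventually_lt_const (half_pos hε)
  filter_upwards [hev1, Filter.eventually_ge_atTop 3, hL.eventually_ge_atTop 3]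
    with n hphin hn3 hL3
  have hL1 : (1:ℝ) < Real.log n := by linarith
  have hL0 : (0:ℝ) < Real.log n := by linarith
  have hLL : 0 < Real.log (Real.log n) := Real.log_pos hL1
  have hcond : Real.log n / Real.log 2 + 1 ≤ (Real.log n)^2 := by
    have h05 : (0.6931471803:ℝ) < Real.log 2 := Real.log_two_gt_d9
    have e : Real.log n / Real.log 2 ≤ 2 * Real.log n := by
      rw [div_le_iff₀ hl2]
      nlinarith
    nlinarith
  have key := logd_le n hn3 c hc0 hc1.le hcond
  set L : ℝ := Real.log n with hLdef
  set LL : ℝ := Real.log L with hLLdef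
  have hlogd0 : (0:ℝ) ≤ Real.log (n.divisors.card) := Real.log_natCast_nonneg _
  calc Real.log (n.divisors.card) * LL / L
      ≤ ((L ^ c + 1) * (2 * LL) + Real.log 2 * (L / (c * LL))) * LL / L := by
        gcongr
    _ = (L ^ c + 1) * 2 * LL^2 / L + Real.log 2 / c := by
        field_simp
    _ ≤ ε/2 + (Real.log 2 + ε/2) := by
        have : (L ^ c + 1) * 2 * LL^2 / L < ε/2 := hphin
        rw [hcc] at *
        linarith
    _ = Real.log 2 + ε := by ring


end Wigert

open Filter

/-- **Wigert.**
`limsup_{n → ∞} (log d(n) · log log n)/(log n) = log 2`. -/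
theorem wigert_limsup_divisor :
    limsup (fun n : ℕ =>
        Real.log (n.divisors.card) * Real.log (Real.log n) / Real.log n) atTop =
      Real.log 2 := by
  set f : ℕ → ℝ := fun n : ℕ =>
    Real.log (n.divisors.card) * Real.log (Real.log n) / Real.log n with hf
  have hbdd : IsBoundedUnder (· ≤ ·) atTop f :=
    ⟨Real.log 2 + 1, eventually_map.mpr (Wigert.upper_ev 1 one_pos)⟩
  have hf0 : ∀ᶠ n : ℕ in atTop, (0:ℝ) ≤ f n := by
    filter_upwards [eventually_ge_atTop 3] with n hn3
    have hL0 : (0:ℝ) < Real.log n := by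
      apply Real.log_pos
      exact_mod_cast by omega
    have hL1 : (1:ℝ) < Real.log n := by
      rw [Real.lt_log_iff_exp_lt (by exact_mod_cast by omega : (0:ℝ) < n)]
      calc Real.exp 1 < 2.7182818286 := Real.exp_one_lt_d9
        _ ≤ 3 := by norm_num
        _ ≤ n := by exact_mod_cast hn3
    have hLL : 0 ≤ Real.log (Real.log n) := (Real.log_pos hL1).le
    have hd : (0:ℝ) ≤ Real.log (n.divisors.card) := Real.log_natCast_nonneg _
    exact div_nonneg (mul_nonneg hd hLL) hL0.le
  have hcob : IsCoboundedUnder (· ≤ ·) atTop f :=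
    isCoboundedUnder_le_of_eventually_le atTop hf0
  apply le_antisymm
  · apply le_of_forall_pos_le_add
    intro ε hε
    exact limsup_le_of_le hcob (Wigert.upper_ev ε hε)
  · apply le_of_forall_pos_le_add
    intro ε hε
    have := le_limsup_of_frequently_le (Wigert.lower_freq ε hε) hbdd
    linarith
end

section
/- There exists a constant C > 0 such that for all sufficiently large real x, |∑_{n ≤ x} d(n) − x·log x − (2γ − 1)·x| ≤ C·x^{1/2}. -/
open Filter Finset


lemma card_divAnti (n : ℕ) : (Nat.divisorsAntidiagonal n).card = n.divisors.card := by
  rw [← Nat.image_fst_divisorsAntidiagonal]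
  refine (Finset.card_image_of_injOn ?_).symm
  intro p hp q hq h
  rw [Finset.mem_coe, Nat.mem_divisorsAntidiagonal] at hp hq
  have h1 : p.1 ≠ 0 := fun h0 => hp.2 (by rw [← hp.1, h0, zero_mul])
  have : p.2 = q.2 := by
    have h2 := hp.1.trans hq.1.symm
    rw [h] at h2
    exact Nat.eq_of_mul_eq_mul_left (Nat.pos_of_ne_zero (h ▸ h1)) h2
  exact Prod.ext h this

def hypT (N : ℕ) : Finset (ℕ × ℕ) :=
  (Icc 1 N ×ˢ Icc 1 N).filter (fun p => p.1 * p.2 ≤ N)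

lemma mem_hypT {N : ℕ} {p : ℕ × ℕ} :
    p ∈ hypT N ↔ 1 ≤ p.1 ∧ 1 ≤ p.2 ∧ p.1 * p.2 ≤ N := by
  simp only [hypT, mem_filter, mem_product, mem_Icc]
  constructor
  · rintro ⟨⟨⟨h1, _⟩, ⟨h2, _⟩⟩, h3⟩; exact ⟨h1, h2, h3⟩
  · rintro ⟨h1, h2, h3⟩
    refine ⟨⟨⟨h1, ?_⟩, ⟨h2, ?_⟩⟩, h3⟩
    · calc p.1 ≤ p.1 * p.2 := Nat.le_mul_of_pos_right _ h2
        _ ≤ N := h3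
    · calc p.2 ≤ p.1 * p.2 := Nat.le_mul_of_pos_left _ h1
        _ ≤ N := h3

lemma claimA (N : ℕ) : ∑ n ∈ Icc 1 N, n.divisors.card = (hypT N).card := by
  have hT : hypT N = (Icc 1 N).biUnion (fun n => Nat.divisorsAntidiagonal n) := by
    ext p
    simp only [mem_biUnion, mem_Icc, Nat.mem_divisorsAntidiagonal, mem_hypT]
    constructor
    · rintro ⟨h1, h2, h3⟩
      exact ⟨p.1 * p.2, ⟨Nat.one_le_iff_ne_zero.2 (by positivity), h3⟩, rfl,
        by positivity⟩
    · rintro ⟨n, ⟨hn1, hn2⟩, rfl, -⟩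
      have hp1 : p.1 ≠ 0 := fun h0 => by rw [h0, zero_mul] at hn1; omega
      have hp2 : p.2 ≠ 0 := fun h0 => by rw [h0, mul_zero] at hn1; omega
      exact ⟨Nat.pos_of_ne_zero hp1, Nat.pos_of_ne_zero hp2, hn2⟩
  rw [hT, Finset.card_biUnion]
  · exact Finset.sum_congr rfl fun n _ => (card_divAnti n).symm
  · intro a ha b hb hab
    simp only [Finset.disjoint_left]
    intro p hpa hpb
    rw [Nat.mem_divisorsAntidiagonal] at hpa hpb
    exact hab (hpa.1.symm.trans hpb.1)



lemma claimB (N K : ℕ) :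
    ((hypT N).filter (fun p => p.1 ≤ K)).card = ∑ a ∈ Icc 1 K, N / a := by
  have hT : (hypT N).filter (fun p => p.1 ≤ K)
      = (Icc 1 K).biUnion (fun a => {a} ×ˢ Icc 1 (N / a)) := by
    ext p
    simp only [mem_biUnion, mem_Icc, mem_filter, mem_hypT, mem_product, mem_singleton]
    constructor
    · rintro ⟨⟨h1, h2, h3⟩, h4⟩
      exact ⟨p.1, ⟨h1, h4⟩, rfl, h2, (Nat.le_div_iff_mul_le h1).2 (by rwa [mul_comm])⟩
    · rintro ⟨a, ⟨ha1, ha2⟩, rfl, hb1, hb2⟩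
      have := (Nat.le_div_iff_mul_le ha1).1 hb2
      exact ⟨⟨ha1, hb1, by rwa [mul_comm] at this⟩, ha2⟩
  rw [hT, Finset.card_biUnion]
  · refine Finset.sum_congr rfl fun a _ => ?_
    rw [Finset.card_product, Finset.card_singleton, one_mul, Nat.card_Icc]
    simp
  · intro a ha b hb hab
    simp only [Finset.disjoint_left, mem_product, mem_singleton]
    rintro p ⟨rfl, -⟩ ⟨h, -⟩
    exact hab h

lemma claimB' (N K : ℕ) :
    ((hypT N).filter (fun p => p.2 ≤ K)).card = ((hypT N).filter (fun p => p.1 ≤ K)).card := by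
  refine Finset.card_bij (fun p _ => p.swap) ?_ ?_ ?_
  · intro p hp
    simp only [mem_filter, mem_hypT] at hp ⊢
    obtain ⟨⟨h1, h2, h3⟩, h4⟩ := hp
    exact ⟨⟨h2, h1, by rwa [Prod.fst_swap, Prod.snd_swap, mul_comm]⟩, h4⟩
  · intro p _ q _ h
    exact Prod.swap_injective h
  · intro p hp
    refine ⟨p.swap, ?_, by simp⟩
    simp only [mem_filter, mem_hypT] at hp ⊢
    obtain ⟨⟨h1, h2, h3⟩, h4⟩ := hp
    exact ⟨⟨h2, h1, by rwa [Prod.fst_swap, Prod.snd_swap, mul_comm]⟩, h4⟩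

lemma claimC (N K : ℕ) (hK : K * K ≤ N) :
    (hypT N).filter (fun p => p.1 ≤ K ∧ p.2 ≤ K) = Icc 1 K ×ˢ Icc 1 K := by
  ext p
  simp only [mem_filter, mem_hypT, mem_product, mem_Icc]
  constructor
  · rintro ⟨⟨h1, h2, -⟩, h4, h5⟩; exact ⟨⟨h1, h4⟩, h2, h5⟩
  · rintro ⟨⟨h1, h4⟩, h2, h5⟩
    exact ⟨⟨h1, h2, (Nat.mul_le_mul h4 h5).trans hK⟩, h4, h5⟩

lemma claimD (N K : ℕ) (hK : N < (K + 1) * (K + 1)) :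
    (hypT N).filter (fun p => p.1 ≤ K) ∪ (hypT N).filter (fun p => p.2 ≤ K) = hypT N := by
  rw [← Finset.filter_or]
  refine Finset.filter_true_of_mem fun p hp => ?_
  rw [mem_hypT] at hp
  by_contra hc
  push_neg at hc
  exact absurd hp.2.2 (by nlinarith [hc.1, hc.2])

lemma hyp_count (N : ℕ) :
    ∑ n ∈ Icc 1 N, n.divisors.card + N.sqrt * N.sqrt
      = 2 * ∑ a ∈ Icc 1 N.sqrt, N / a := by
  have hA : ∑ n ∈ Icc 1 N, n.divisors.card = (hypT N).card := claimA N
  set K := N.sqrt with hKdef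
  have h1 : K * K ≤ N := by have := Nat.sqrt_le' N; nlinarith [this]
  have h2 : N < (K + 1) * (K + 1) := by have := Nat.lt_succ_sqrt' N; simp [Nat.succ_eq_add_one, pow_two] at this; nlinarith [this]
  have hcui := Finset.card_union_add_card_inter
    ((hypT N).filter (fun p => p.1 ≤ K)) ((hypT N).filter (fun p => p.2 ≤ K))
  rw [claimD N K h2, ← Finset.filter_and, claimC N K h1] at hcui
  rw [claimB' N K, claimB N K] at hcui
  rw [Finset.card_product, Nat.card_Icc, Nat.add_sub_cancel] at hcui
  rw [hA]
  omega

lemma harmonic_est {n : ℕ} (hn : n ≠ 0) :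
    Real.eulerMascheroniConstant ≤ (harmonic n : ℝ) - Real.log n ∧
    (harmonic n : ℝ) - Real.log n ≤ Real.eulerMascheroniConstant + 1 / n := by
  have h1 := Real.eulerMascheroniConstant_lt_eulerMascheroniSeq' n
  have h2 := Real.eulerMascheroniSeq_lt_eulerMascheroniConstant n
  rw [Real.eulerMascheroniSeq'] at h1
  rw [if_neg hn] at h1
  rw [Real.eulerMascheroniSeq] at h2
  have hn0 : (0:ℝ) < n := by positivity
  have hlog : Real.log (n + 1) - Real.log n ≤ 1 / n := by
    have h3 : Real.log ((n + 1) / n) ≤ (n + 1) / n - 1 :=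
      Real.log_le_sub_one_of_pos (by positivity)
    rw [Real.log_div (by positivity) (by positivity)] at h3
    have : ((n:ℝ) + 1) / n - 1 = 1 / n := by field_simp; ring
    linarith [this ▸ h3]
  constructor
  · linarith
  · linarith

lemma floor_div_bounds (N a : ℕ) (ha : 1 ≤ a) :
    (N : ℝ) / a - 1 ≤ ((N / a : ℕ) : ℝ) ∧ ((N / a : ℕ) : ℝ) ≤ (N : ℝ) / a := by
  have ha0 : (0:ℝ) < a := by exact_mod_cast ha
  have hd := Nat.div_add_mod N a
  have hm : N % a < a := Nat.mod_lt N ha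
  have hdr : (a:ℝ) * ((N / a : ℕ) : ℝ) + ((N % a : ℕ) : ℝ) = N := by exact_mod_cast hd
  have hmr : ((N % a : ℕ) : ℝ) < a := by exact_mod_cast hm
  have hmr0 : (0:ℝ) ≤ ((N % a : ℕ) : ℝ) := by positivity
  constructor
  · rw [div_sub_one (ne_of_gt ha0), div_le_iff₀ ha0]
    nlinarith
  · rw [le_div_iff₀ ha0]
    nlinarith




set_option maxHeartbeats 1000000 in
lemma key (N : ℕ) (hN : 16 ≤ N) :
    |(∑ n ∈ Icc 1 N, (n.divisors.card : ℝ)) - N * Real.log N -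
      (2 * Real.eulerMascheroniConstant - 1) * N| ≤ 13 * Real.sqrt N := by
  set K := N.sqrt with hKdef
  have hK4 : 4 ≤ K := Nat.le_sqrt.2 (by omega)
  have hKK : K * K ≤ N := by have := Nat.sqrt_le' N; nlinarith [this]
  have hKK2 : N < (K + 1) * (K + 1) := by
    have := Nat.lt_succ_sqrt' N
    simp only [Nat.succ_eq_add_one, pow_two] at this; nlinarith [this]
  set n : ℝ := (N : ℝ) with hn
  set k : ℝ := (K : ℝ) with hk
  set g : ℝ := Real.eulerMascheroniConstant with hg
  set L : ℝ := Real.log k with hL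
  set H : ℝ := ((harmonic K : ℚ) : ℝ) with hH
  set f : ℝ := ∑ a ∈ Icc 1 K, ((N / a : ℕ) : ℝ) with hf
  set S : ℝ := ∑ m ∈ Icc 1 N, ((m.divisors.card : ℕ) : ℝ) with hS
  have hk4 : (4:ℝ) ≤ k := by rw [hk]; exact_mod_cast hK4
  have hk0 : (0:ℝ) < k := by linarith
  have hkkn : k * k ≤ n := by rw [hn, hk]; exact_mod_cast hKK
  have hnkk : n ≤ k*k + 2*k + 1 := by
    have h1 : n < (k+1)*(k+1) := by rw [hn, hk]; exact_mod_cast hKK2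
    nlinarith [h1]
  have hn0 : (0:ℝ) < n := by nlinarith
  have hid : S + k * k = 2 * f := by
    rw [hS, hf, hk]
    exact_mod_cast hyp_count N
  have hHsum : ∑ a ∈ Icc 1 K, n / (a:ℝ) = n * H := by
    rw [hH, harmonic_eq_sum_Icc]
    push_cast
    rw [Finset.mul_sum]
    exact Finset.sum_congr rfl fun a _ => div_eq_mul_inv _ _
  have hfu : f ≤ n * H := by
    rw [hf, ← hHsum]
    exact Finset.sum_le_sum fun a ha => (floor_div_bounds N a (mem_Icc.1 ha).1).2
  have hfl : n * H - k ≤ f := by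
    have h1 : ∑ a ∈ Icc 1 K, (n / (a:ℝ) - 1) ≤ f := by
      rw [hf]
      exact Finset.sum_le_sum fun a ha => (floor_div_bounds N a (mem_Icc.1 ha).1).1
    rw [Finset.sum_sub_distrib, hHsum, Finset.sum_const, Nat.card_Icc,
      Nat.add_sub_cancel, nsmul_eq_mul, mul_one] at h1
    rw [← hk] at h1
    exact h1
  have hKne : K ≠ 0 := by omega
  have hest := harmonic_est hKne
  have hHl : L + g ≤ H := by rw [hL, hk, hg]; linarith [hest.1]
  have hHu : H ≤ L + g + 1/k := by rw [hL, hk, hg]; linarith [hest.2]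
  have hlogn_l : 2 * L ≤ Real.log n := by
    have h1 : Real.log (k * k) ≤ Real.log n := Real.log_le_log (by positivity) hkkn
    rw [Real.log_mul (ne_of_gt hk0) (ne_of_gt hk0)] at h1
    linarith
  have hlogn_u : Real.log n ≤ 2 * L + 3 / k := by
    have h1 : Real.log (n / (k * k)) ≤ n / (k * k) - 1 :=
      Real.log_le_sub_one_of_pos (by positivity)
    rw [Real.log_div (ne_of_gt hn0) (by positivity),
      Real.log_mul (ne_of_gt hk0) (ne_of_gt hk0)] at h1
    have h2 : n / (k * k) - 1 ≤ 3 / k := by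
      rw [div_sub_one (by positivity), div_le_div_iff₀ (by positivity) hk0]
      nlinarith
    linarith
  have hs : k ≤ Real.sqrt n := (Real.le_sqrt' hk0).2 (by nlinarith)
  have hs0 : 0 ≤ Real.sqrt n := Real.sqrt_nonneg n
  have hnH_u : n * H ≤ n * L + n * g + n / k := by
    have h1 := mul_le_mul_of_nonneg_left hHu hn0.le
    have h2 : n * (L + g + 1/k) = n * L + n * g + n / k := by ring
    rw [h2] at h1; linarith
  have hnH_l : n * L + n * g ≤ n * H := by
    have h1 := mul_le_mul_of_nonneg_left hHl hn0.le
    have h2 : n * (L + g) = n * L + n * g := by ring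
    rw [h2] at h1; linarith
  have hnk2 : n / k ≤ 2 * k := by
    rw [div_le_iff₀ hk0]; nlinarith [hk4, hnkk]
  have hnk0 : 0 ≤ n / k := by positivity
  have hlogmul_l : 2 * (n * L) ≤ n * Real.log n := by
    have h1 := mul_le_mul_of_nonneg_left hlogn_l hn0.le
    have h2 : n * (2 * L) = 2 * (n * L) := by ring
    rw [h2] at h1; linarith
  have hlogmul_u : n * Real.log n ≤ 2 * (n * L) + 6 * k := by
    have h1 := mul_le_mul_of_nonneg_left hlogn_u hn0.le
    have h2 : n * (2 * L + 3 / k) = 2 * (n * L) + 3 * (n / k) := by ring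
    rw [h2] at h1; linarith [hnk2]
  rw [abs_le]
  constructor
  · linarith [hid, hfl, hnH_l, hlogmul_u, hs, hs0, hkkn, hk4]
  · linarith [hid, hfu, hnH_u, hlogmul_l, hs, hs0, hnkk, hk4, hnk2]

/-- There is a constant `C > 0` such that for all sufficiently large
real `x`, `|∑_{n ≤ x} d(n) − x log x − (2γ − 1)x| ≤ C x^{1/2}`. -/
theorem divisor_summatory_dirichlet :
    ∃ C : ℝ, 0 < C ∧ ∀ᶠ x : ℝ in atTop,
      |(∑ n ∈ Finset.Icc 1 ⌊x⌋₊, (n.divisors.card : ℝ)) - x * Real.log x -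
        (2 * Real.eulerMascheroniConstant - 1) * x| ≤ C * x ^ ((1 : ℝ) / 2) := by
  refine ⟨20, by norm_num, ?_⟩
  filter_upwards [eventually_ge_atTop (16 : ℝ)] with x hx
  set N := ⌊x⌋₊ with hNdef
  have hN : 16 ≤ N := Nat.le_floor (by exact_mod_cast hx)
  set n : ℝ := (N : ℝ) with hn
  have hn16 : (16:ℝ) ≤ n := by rw [hn]; exact_mod_cast hN
  have hnx : n ≤ x := Nat.floor_le (by linarith)
  have hxn : x < n + 1 := Nat.lt_floor_add_one x
  have hn0 : (0:ℝ) < n := by linarith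
  have hx0 : (0:ℝ) < x := by linarith
  have hkey := key N hN
  rw [abs_le] at hkey
  set g : ℝ := Real.eulerMascheroniConstant with hg
  have hgl : (1:ℝ)/2 < g := Real.one_half_lt_eulerMascheroniConstant
  have hgu : g < 2/3 := Real.eulerMascheroniConstant_lt_two_thirds
  -- log comparisons
  have hlogx0 : (0:ℝ) ≤ Real.log x := Real.log_nonneg (by linarith)
  have hln0 : (0:ℝ) ≤ Real.log n := Real.log_nonneg (by linarith)
  have hloge : Real.log n ≤ Real.log x := Real.log_le_log hn0 hnx
  have hld : n * (Real.log x - Real.log n) ≤ 1 := by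
    have h1 : Real.log (x / n) ≤ x / n - 1 := Real.log_le_sub_one_of_pos (by positivity)
    rw [Real.log_div (ne_of_gt hx0) (ne_of_gt hn0)] at h1
    have h2 := mul_le_mul_of_nonneg_left h1 hn0.le
    have h3 : n * (x / n - 1) = x - n := by field_simp
    rw [h3] at h2
    linarith
  have hE1 : x * Real.log x - n * Real.log x = (x - n) * Real.log x := by ring
  have hE2 : n * Real.log x - n * Real.log n = n * (Real.log x - Real.log n) := by ring
  have hxn1 : (x - n) * Real.log x ≤ 1 * Real.log x :=
    mul_le_mul_of_nonneg_right (by linarith) hlogx0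
  have hnlx_u : n * Real.log n ≤ x * Real.log x :=
    mul_le_mul hnx hloge hln0 hx0.le
  have hnlx_l : x * Real.log x - n * Real.log n ≤ 1 + Real.log x := by linarith
  -- (2g-1)(n-x) ∈ [-1, 0]
  have hgc_l : -1 ≤ (2*g - 1) * (n - x) := by nlinarith
  have hgc_u : (2*g - 1) * (n - x) ≤ 0 := by nlinarith
  -- sqrt facts
  have hsx0 : (0:ℝ) < Real.sqrt x := Real.sqrt_pos.2 hx0
  have hsx4 : (4:ℝ) ≤ Real.sqrt x := by
    have : Real.sqrt 16 ≤ Real.sqrt x := Real.sqrt_le_sqrt hx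
    rwa [show (16:ℝ) = 4^2 by norm_num, Real.sqrt_sq (by norm_num)] at this
  have hb4 : Real.log x ≤ 2 * Real.sqrt x - 2 := by
    have h1 : Real.log (Real.sqrt x) ≤ Real.sqrt x - 1 := Real.log_le_sub_one_of_pos hsx0
    rw [Real.log_sqrt hx0.le] at h1
    linarith
  have hb5 : Real.sqrt n ≤ Real.sqrt x := Real.sqrt_le_sqrt hnx
  rw [show x ^ ((1:ℝ)/2) = Real.sqrt x from (Real.sqrt_eq_rpow x).symm]
  rw [abs_le]
  have hdecomp : ∀ S : ℝ, S - x * Real.log x - (2*g - 1) * x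
      = (S - n * Real.log n - (2*g - 1) * n) + (n * Real.log n - x * Real.log x)
        + (2*g - 1) * (n - x) := by intro S; ring
  rw [hdecomp]
  constructor
  · linarith [hkey.1]
  · linarith [hkey.2]
end
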